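/- arXiv:1405.6625 — 5 statements merged into one kernel-verified Lean document; each statement's English description precedes it below -/
import Mathlib

section
/- Let γ > 0 and W(x) = (x−1)²(x+1)². Every twice continuously differentiable solution Ψ : ℝ → ℝ of the ordinary differential equation W'(Ψ) − γ Ψ'' = 0 on ℝ satisfying Ψ'(z) → 0 as z → ±∞ and Ψ(z) → ±1 as z → ±∞ is given by Ψ(z) = Ψ̄(z − z̄) for some z̄ ∈ ℝ, where Ψ̄(z) = tanh(√(2/γ)·z) is the unique monotonically increasing solution with Ψ̄(0) = 0. -/
open Filter Real

open Set

set_option maxHeartbeats 1600000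


lemma gz_forward {f : ℝ → ℝ} {K : ℝ} (hf : Differentiable ℝ f)
    (hb : ∀ z, |deriv f z| ≤ K * |f z|) {z₀ : ℝ} (h0 : f z₀ = 0) :
    ∀ z, z₀ ≤ z → f z = 0 := by
  intro z hz
  have h := norm_le_gronwallBound_of_norm_deriv_right_le (f := f) (f' := deriv f)
    (δ := 0) (K := K) (ε := 0) (a := z₀) (b := z)
    (hf.continuous.continuousOn)
    (fun x _ => (hf x).hasDerivAt.hasDerivWithinAt)
    (by simp [h0])
    (fun x _ => by simpa [Real.norm_eq_abs] using hb x)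
    z (right_mem_Icc.mpr hz)
  rw [gronwallBound_ε0_δ0] at h
  have : |f z| ≤ 0 := by simpa [Real.norm_eq_abs] using h
  exact abs_eq_zero.mp (le_antisymm this (abs_nonneg _))

lemma gz_all {f : ℝ → ℝ} {K : ℝ} (hf : Differentiable ℝ f)
    (hb : ∀ z, |deriv f z| ≤ K * |f z|) {z₀ : ℝ} (h0 : f z₀ = 0) :
    ∀ z, f z = 0 := by
  intro z
  rcases le_total z₀ z with hz | hz
  · exact gz_forward hf hb h0 z hz
  · set g : ℝ → ℝ := fun t => f (2 * z₀ - t) with hg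
    have hdg : ∀ t, HasDerivAt g (deriv f (2 * z₀ - t) * (-1)) t := fun t =>
      (hf (2 * z₀ - t)).hasDerivAt.comp t (((hasDerivAt_id t).const_sub (2 * z₀)))
    have hgd : Differentiable ℝ g := fun t => (hdg t).differentiableAt
    have hgb : ∀ t, |deriv g t| ≤ K * |g t| := by
      intro t
      rw [(hdg t).deriv]
      simpa [hg] using hb (2 * z₀ - t)
    have hg0 : g z₀ = 0 := by simp only [hg]; rw [show 2*z₀ - z₀ = z₀ by ring]; exact h0
    have := gz_forward hgd hgb hg0 (2 * z₀ - z) (by linarith)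
    simp only [hg] at this
    rwa [show 2*z₀ - (2*z₀ - z) = z by ring] at this

lemma tanh_hasDerivAt (x : ℝ) : HasDerivAt Real.tanh (1 - Real.tanh x ^ 2) x := by
  have hc := Real.cosh_pos x
  have h := (Real.hasDerivAt_sinh x).div (Real.hasDerivAt_cosh x) hc.ne'
  have heq : Real.tanh = fun y => Real.sinh y / Real.cosh y :=
    funext fun y => Real.tanh_eq_sinh_div_cosh y
  rw [heq]
  refine h.congr_deriv ?_
  have hid := Real.cosh_sq_sub_sinh_sq x
  field_simp

lemma abs_tanh_le_one (x : ℝ) : |Real.tanh x| ≤ 1 := by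
  have h1 := Real.sinh_lt_cosh x
  have h2 := Real.sinh_lt_cosh (-x)
  rw [Real.sinh_neg, Real.cosh_neg] at h2
  have hc := Real.cosh_pos x
  rw [Real.tanh_eq_sinh_div_cosh, abs_div, abs_of_pos hc, div_le_one hc]
  rw [abs_le]; constructor <;> linarith


/-- classification of heteroclinic profiles. Every `C²` solution of
`W'(Ψ) - γ Ψ'' = 0` with `Ψ' → 0` and `Ψ → ±1` at `±∞` is a translate of the
standing wave `Ψ̄(z) = tanh(√(2/γ) z)`. -/
theorem stmt_2 (γ : ℝ) (hγ : 0 < γ) (W : ℝ → ℝ)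
    (hW : W = fun x => (x - 1) ^ 2 * (x + 1) ^ 2)
    (Ψ : ℝ → ℝ) (hΨ : ContDiff ℝ 2 Ψ)
    (heq : ∀ z : ℝ, deriv W (Ψ z) - γ * deriv (deriv Ψ) z = 0)
    (hd0 : Tendsto (deriv Ψ) atTop (nhds 0)) (hd0' : Tendsto (deriv Ψ) atBot (nhds 0))
    (hp : Tendsto Ψ atTop (nhds 1)) (hm : Tendsto Ψ atBot (nhds (-1))) :
    ∃ zbar : ℝ, ∀ z : ℝ, Ψ z = Real.tanh (Real.sqrt (2 / γ) * (z - zbar)) := by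
  -- basic differentiability
  have hΨ1 : Differentiable ℝ Ψ := hΨ.differentiable (by norm_num)
  have h2 : ContDiff ℝ (1 + 1 : WithTop ℕ∞) Ψ := by norm_num; exact hΨ
  have hΨd : Differentiable ℝ (deriv Ψ) := by
    have := (contDiff_succ_iff_deriv.mp h2).2.2
    exact this.differentiable (by norm_num)
  have hΨc : Continuous Ψ := hΨ1.continuous
  have hΨdc : Continuous (deriv Ψ) := hΨ.continuous_deriv (by norm_num)
  -- derivative of W
  have hWd : ∀ x : ℝ, HasDerivAt W (4 * x ^ 3 - 4 * x) x := by
    intro x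
    have h1 : HasDerivAt (fun x : ℝ => (x - 1) ^ 2 * (x + 1) ^ 2)
        ((↑2 * (x - 1) ^ (2 - 1) * 1) * (x + 1) ^ 2 + (x - 1) ^ 2 * (↑2 * (x + 1) ^ (2 - 1) * 1)) x :=
      (((hasDerivAt_id x).sub_const 1).pow 2).mul (((hasDerivAt_id x).add_const 1).pow 2)
    rw [hW]
    convert h1 using 1
    norm_num; ring
  have hW' : ∀ x : ℝ, deriv W x = 4 * x ^ 3 - 4 * x := fun x => (hWd x).deriv
  -- energy
  set E : ℝ → ℝ := fun z => γ / 2 * (deriv Ψ z) ^ 2 - W (Ψ z) with hE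
  have hEd : ∀ z, HasDerivAt E 0 z := by
    intro z
    have h1 : HasDerivAt (deriv Ψ) (deriv (deriv Ψ) z) z := (hΨd z).hasDerivAt
    have h2 : HasDerivAt Ψ (deriv Ψ z) z := (hΨ1 z).hasDerivAt
    have h3 : HasDerivAt (fun z => W (Ψ z)) ((4 * (Ψ z) ^ 3 - 4 * Ψ z) * deriv Ψ z) z :=
      (hWd (Ψ z)).comp z h2
    have h4 := (((h1.pow 2)).const_mul (γ / 2)).sub h3
    have h5 := heq z
    rw [hW' (Ψ z)] at h5
    refine h4.congr_deriv ?_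
    push_cast
    linear_combination (-deriv Ψ z) * h5
  have hEconst : ∀ z, E z = E 0 :=
    fun z => is_const_of_deriv_eq_zero (fun x => (hEd x).differentiableAt)
      (fun x => (hEd x).deriv) z 0
  have hWcont : Continuous W := by rw [hW]; continuity
  have hElim : Tendsto E atTop (nhds (γ / 2 * 0 ^ 2 - W 1)) := by
    exact ((hd0.pow 2).const_mul (γ / 2)).sub ((hWcont.tendsto 1).comp hp)
  have hE0 : E 0 = 0 := by
    have h1 : Tendsto E atTop (nhds (E 0)) :=
      Tendsto.congr (fun z => (hEconst z).symm) tendsto_const_nhds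
    have := tendsto_nhds_unique h1 hElim
    rw [this, hW]; norm_num
  have energy : ∀ z, (deriv Ψ z) ^ 2 = 2 / γ * ((Ψ z) ^ 2 - 1) ^ 2 := by
    intro z
    have h1 := (hEconst z).trans hE0
    rw [hE] at h1
    simp only [hW] at h1
    field_simp at h1 ⊢
    nlinarith [h1]
  -- constants
  set c := Real.sqrt (2 / γ) with hc
  have hcpos : 0 < c := Real.sqrt_pos.mpr (by positivity)
  have hc2 : c ^ 2 = 2 / γ := Real.sq_sqrt (by positivity)
  have habs : ∀ z, |deriv Ψ z| = c * |(Ψ z) ^ 2 - 1| := by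
    intro z
    rw [← Real.sqrt_sq_eq_abs (deriv Ψ z), energy z, Real.sqrt_mul (by positivity),
      Real.sqrt_sq_eq_abs, hc]
  -- |Ψ| ≤ 1
  have hbound : ∀ z, |Ψ z| ≤ 1 := by
    intro z₁
    by_contra hgt
    push_neg at hgt
    rcases lt_abs.mp hgt with h | h
    · obtain ⟨b, hb⟩ := (hp.eventually_lt_const h).exists_forall_of_atTop
      obtain ⟨b', hb'⟩ := (hm.eventually_lt_const (by linarith : (-1:ℝ) < Ψ z₁)).exists_forall_of_atBot
      have hz₁b : z₁ < b := by
        by_contra hh; push_neg at hh; exact lt_irrefl _ (hb z₁ hh)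
      have hz₁b' : b' < z₁ := by
        by_contra hh; push_neg at hh; exact lt_irrefl _ (hb' z₁ hh)
      have hsub : z₁ ∈ Icc b' b := ⟨le_of_lt hz₁b', le_of_lt hz₁b⟩
      obtain ⟨xm, hxm, hmax⟩ := (isCompact_Icc (a := b') (b := b)).exists_isMaxOn
        ⟨z₁, hsub⟩ hΨc.continuousOn
      have hxmv : Ψ z₁ ≤ Ψ xm := hmax hsub
      have hxb' : b' < xm := by
        rcases hxm.1.lt_or_eq with h' | h'
        · exact h'
        · exfalso; rw [← h'] at hxmv; exact lt_irrefl _ (lt_of_lt_of_le (hb' b' le_rfl) hxmv)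
      have hxb : xm < b := by
        rcases hxm.2.lt_or_eq with h' | h'
        · exact h'
        · exfalso; rw [h'] at hxmv; exact lt_irrefl _ (lt_of_lt_of_le (hb b le_rfl) hxmv)
      have hloc : IsLocalMax Ψ xm := hmax.isLocalMax (Icc_mem_nhds hxb' hxb)
      have hd := hloc.deriv_eq_zero
      have h6 := habs xm
      rw [hd, abs_zero] at h6
      have h7 : |Ψ xm ^ 2 - 1| = 0 := by
        rcases mul_eq_zero.mp h6.symm with h8 | h8
        · exact absurd h8 hcpos.ne'
        · exact h8
      rw [abs_eq_zero] at h7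
      nlinarith [hxmv, h]
    · obtain ⟨b, hb⟩ := (hp.eventually_const_lt (by linarith : Ψ z₁ < 1)).exists_forall_of_atTop
      obtain ⟨b', hb'⟩ := (hm.eventually_const_lt (by linarith : Ψ z₁ < -1)).exists_forall_of_atBot
      have hz₁b : z₁ < b := by
        by_contra hh; push_neg at hh; exact lt_irrefl _ (hb z₁ hh)
      have hz₁b' : b' < z₁ := by
        by_contra hh; push_neg at hh; exact lt_irrefl _ (hb' z₁ hh)
      have hsub : z₁ ∈ Icc b' b := ⟨le_of_lt hz₁b', le_of_lt hz₁b⟩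
      obtain ⟨xm, hxm, hmin⟩ := (isCompact_Icc (a := b') (b := b)).exists_isMinOn
        ⟨z₁, hsub⟩ hΨc.continuousOn
      have hxmv : Ψ xm ≤ Ψ z₁ := hmin hsub
      have hxb' : b' < xm := by
        rcases hxm.1.lt_or_eq with h' | h'
        · exact h'
        · exfalso; rw [← h'] at hxmv; exact lt_irrefl _ (lt_of_le_of_lt hxmv (hb' b' le_rfl))
      have hxb : xm < b := by
        rcases hxm.2.lt_or_eq with h' | h'
        · exact h'
        · exfalso; rw [h'] at hxmv; exact lt_irrefl _ (lt_of_le_of_lt hxmv (hb b le_rfl))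
      have hloc : IsLocalMin Ψ xm := hmin.isLocalMin (Icc_mem_nhds hxb' hxb)
      have hd := hloc.deriv_eq_zero
      have h6 := habs xm
      rw [hd, abs_zero] at h6
      have h7 : |Ψ xm ^ 2 - 1| = 0 := by
        rcases mul_eq_zero.mp h6.symm with h8 | h8
        · exact absurd h8 hcpos.ne'
        · exact h8
      rw [abs_eq_zero] at h7
      nlinarith [hxmv, h]
  -- strict bounds
  have hgron : ∀ s : ℝ, (s = 1 ∨ s = -1) → (∀ z, Ψ z = s) → False := by
    intro s hs hall
    have h1 : Tendsto Ψ atBot (nhds s) :=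
      Tendsto.congr (fun z => (hall z).symm) tendsto_const_nhds
    have h2 : Tendsto Ψ atTop (nhds s) :=
      Tendsto.congr (fun z => (hall z).symm) tendsto_const_nhds
    rcases hs with h | h
    · have := tendsto_nhds_unique hm h1
      rw [h] at this; norm_num at this
    · have := tendsto_nhds_unique hp h2
      rw [h] at this; norm_num at this
  have hkey : ∀ s : ℝ, (s = 1 ∨ s = -1) → ∀ z₀, Ψ z₀ ≠ s := by
    intro s hs z₀ h0
    have hdiff : Differentiable ℝ (fun z => Ψ z - s) := hΨ1.sub_const s
    have hballs : ∀ z, |deriv (fun z => Ψ z - s) z| ≤ (2 * c) * |Ψ z - s| := by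
      intro z
      rw [deriv_sub_const]
      have h1 := habs z
      have hs2 : s ^ 2 = 1 := by rcases hs with h | h <;> rw [h] <;> norm_num
      have h2 : |Ψ z ^ 2 - 1| = |Ψ z + s| * |Ψ z - s| := by
        rw [← abs_mul]
        congr 1
        nlinarith [hs2]
      have habs_s : |s| = (1:ℝ) := by
        rcases hs with h | h <;> rw [h] <;> norm_num
      have h3 : |Ψ z + s| ≤ 2 := by
        have h4 := abs_add_le (Ψ z) s
        have h5 := hbound z
        rw [habs_s] at h4
        linarith
      rw [h1, h2]
      have h5 : (0:ℝ) ≤ |Ψ z - s| := abs_nonneg _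
      calc c * (|Ψ z + s| * |Ψ z - s|) ≤ c * (2 * |Ψ z - s|) :=
            mul_le_mul_of_nonneg_left (mul_le_mul_of_nonneg_right h3 h5) hcpos.le
        _ = 2 * c * |Ψ z - s| := by ring
    have hall : ∀ z, Ψ z - s = 0 := gz_all hdiff hballs (by rw [h0]; ring)
    exact hgron s hs (fun z => by linarith [hall z])
  have hlt : ∀ z, -1 < Ψ z ∧ Ψ z < 1 := by
    intro z
    have h1 := abs_le.mp (hbound z)
    constructor
    · exact h1.1.lt_of_ne (fun e => hkey (-1) (Or.inr rfl) z e.symm)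
    · exact h1.2.lt_of_ne (hkey 1 (Or.inl rfl) z)
  -- deriv never zero
  have hdne : ∀ z, deriv Ψ z ≠ 0 := by
    intro z h0
    have h1 := habs z
    rw [h0, abs_zero] at h1
    have h7 : |Ψ z ^ 2 - 1| = 0 := by
      rcases mul_eq_zero.mp h1.symm with h8 | h8
      · exact absurd h8 hcpos.ne'
      · exact h8
    rw [abs_eq_zero] at h7
    nlinarith [hlt z]
  -- a point of positive derivative
  obtain ⟨b₂, hb₂⟩ := (hp.eventually_const_lt (by norm_num : (0:ℝ) < 1)).exists_forall_of_atTop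
  obtain ⟨b₁, hb₁⟩ := (hm.eventually_lt_const (by norm_num : (-1:ℝ) < 0)).exists_forall_of_atBot
  have hab : b₁ < max b₂ (b₁ + 1) := lt_of_lt_of_le (by linarith) (le_max_right _ _)
  have hΨa : Ψ b₁ < 0 := hb₁ b₁ le_rfl
  have hΨb : 0 < Ψ (max b₂ (b₁ + 1)) := hb₂ _ (le_max_left _ _)
  obtain ⟨x₀, hx₀, hslope⟩ := exists_hasDerivAt_eq_slope Ψ (deriv Ψ) hab
    hΨc.continuousOn (fun x _ => (hΨ1 x).hasDerivAt)
  have hpos₀ : 0 < deriv Ψ x₀ := by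
    rw [hslope]; apply div_pos <;> linarith
  -- derivative positive everywhere
  have hdpos : ∀ z, 0 < deriv Ψ z := by
    intro z
    rcases lt_or_ge 0 (deriv Ψ z) with h | h
    · exact h
    · exfalso
      have h' : deriv Ψ z < 0 := h.lt_of_ne (hdne z)
      have h0m : (0:ℝ) ∈ Icc (deriv Ψ z) (deriv Ψ x₀) := ⟨le_of_lt h', le_of_lt hpos₀⟩
      obtain ⟨w, hw⟩ := intermediate_value_univ z x₀ hΨdc h0m
      exact hdne w hw
  have hode : ∀ z, deriv Ψ z = c * (1 - Ψ z ^ 2) := by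
    intro z
    have h1 := habs z
    rw [abs_of_pos (hdpos z), abs_of_neg (by nlinarith [hlt z] : Ψ z ^ 2 - 1 < 0)] at h1
    rw [h1]; ring
  -- find the zero of Ψ
  have h0mem : (0:ℝ) ∈ Icc (Ψ b₁) (Ψ (max b₂ (b₁ + 1))) := ⟨le_of_lt hΨa, le_of_lt hΨb⟩
  obtain ⟨zb, hzb⟩ := intermediate_value_univ b₁ (max b₂ (b₁ + 1)) hΨc h0mem
  refine ⟨zb, ?_⟩
  set F : ℝ → ℝ := fun z => Real.tanh (c * (z - zb)) with hFdef
  have hFd : ∀ z, HasDerivAt F (c * (1 - F z ^ 2)) z := by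
    intro z
    have h1 : HasDerivAt (fun z : ℝ => c * (z - zb)) c z := by
      simpa using ((hasDerivAt_id z).sub_const zb).const_mul c
    have h2 := (tanh_hasDerivAt (c * (z - zb))).comp z h1
    simp only [hFdef]
    exact h2.congr_deriv (by ring)
  have hdd : Differentiable ℝ (fun z => Ψ z - F z) :=
    hΨ1.sub (fun z => (hFd z).differentiableAt)
  have hzb0 : Ψ zb - F zb = 0 := by
    simp [hFdef, hzb, Real.tanh_zero]
  have key : ∀ z, Ψ z - F z = 0 := by
    apply gz_all (K := 2 * c) hdd _ hzb0
    intro z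
    have hder : deriv (fun z => Ψ z - F z) z = deriv Ψ z - c * (1 - F z ^ 2) := by
      rw [deriv_fun_sub (hΨ1 z) (hFd z).differentiableAt, (hFd z).deriv]
    rw [hder, hode z]
    have hFb := abs_tanh_le_one (c * (z - zb))
    have hPb : |Ψ z| ≤ 1 := hbound z
    have h3 : c * (1 - Ψ z ^ 2) - c * (1 - F z ^ 2) = c * ((F z + Ψ z) * (F z - Ψ z)) := by
      simp only [hFdef]; ring
    rw [h3, abs_mul, abs_mul, abs_of_pos hcpos]
    have h4 : |F z + Ψ z| ≤ 2 := by
      have := (abs_add_le (F z) (Ψ z)).trans (add_le_add (by simpa [hFdef] using hFb) hPb)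
      linarith
    rw [abs_sub_comm (F z) (Ψ z)]
    have h5 : (0:ℝ) ≤ |Ψ z - F z| := abs_nonneg _
    calc c * (|F z + Ψ z| * |Ψ z - F z|) ≤ c * (2 * |Ψ z - F z|) :=
          mul_le_mul_of_nonneg_left (mul_le_mul_of_nonneg_right h4 h5) hcpos.le
      _ = 2 * c * |Ψ z - F z| := by ring
  intro z
  have h6 := key z
  simp only [hFdef] at h6
  linarith
end

section
/- Let γ > 0 and W(x) = (x−1)²(x+1)². If Ψ : ℝ → ℝ is a twice continuously differentiable solution of W'(Ψ) − γ Ψ'' = 0 on ℝ with Ψ'(z) → 0 as z → ±∞ and Ψ(z) → ±1 as z → ±∞, then −1 < Ψ(z) < 1 for all z ∈ ℝ and Ψ satisfies the first-order quadrature equation Ψ'(z) = √(2/γ)·(1 − Ψ(z)²) for all z ∈ ℝ. -/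
open Filter Real

lemma gronwall_fwd_aux {v v' : ℝ → ℝ} {K : ℝ}
    (hd : ∀ x, HasDerivAt v (v' x) x)
    (hb : ∀ x, |v' x| ≤ K * |v x|) {z₀ : ℝ} (h0 : v z₀ = 0) :
    ∀ z, z₀ ≤ z → v z = 0 := by
  intro z hz
  have hc : Continuous v :=
    (Differentiable.continuous (fun x => (hd x).differentiableAt))
  have H := norm_le_gronwallBound_of_norm_deriv_right_le (f := v) (f' := v')
      (δ := 0) (K := K) (ε := 0) (a := z₀) (b := z)
      hc.continuousOn (fun x _ => (hd x).hasDerivWithinAt)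
      (by simp [Real.norm_eq_abs, h0])
      (fun x _ => by simpa [Real.norm_eq_abs] using hb x)
  have := H z ⟨hz, le_rfl⟩
  rw [gronwallBound_ε0_δ0] at this
  simpa [Real.norm_eq_abs, abs_nonpos_iff] using this

lemma gronwall_zero_aux {v v' : ℝ → ℝ} {K : ℝ}
    (hd : ∀ x, HasDerivAt v (v' x) x)
    (hb : ∀ x, |v' x| ≤ K * |v x|) {z₀ : ℝ} (h0 : v z₀ = 0) :
    ∀ z, v z = 0 := by
  intro z
  rcases le_total z₀ z with h | h
  · exact gronwall_fwd_aux hd hb h0 z h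
  · set w : ℝ → ℝ := fun t => v (2 * z₀ - t) with hw
    have hdw : ∀ t, HasDerivAt w (v' (2 * z₀ - t) * (0 - 1)) t := by
      intro t
      exact (hd (2 * z₀ - t)).comp t
        ((hasDerivAt_const t (2 * z₀)).sub (hasDerivAt_id t))
    have hbw : ∀ t, |v' (2 * z₀ - t) * (0 - 1)| ≤ K * |w t| := by
      intro t
      simpa [abs_mul] using hb (2 * z₀ - t)
    have h0w : w z₀ = 0 := by simp [hw, two_mul, h0]
    have := gronwall_fwd_aux hdw hbw h0w (2 * z₀ - z) (by linarith)
    simpa [hw] using this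

/-- Any `C²` heteroclinic solution of `W'(Ψ) - γ Ψ'' = 0` with
`Ψ' → 0`, `Ψ → ±1` at `±∞` stays strictly between `-1` and `1` and satisfies
the first-order quadrature equation `Ψ' = √(2/γ) (1 - Ψ²)`. -/
theorem stmt_3 (γ : ℝ) (hγ : 0 < γ) (W : ℝ → ℝ)
    (hW : W = fun x => (x - 1) ^ 2 * (x + 1) ^ 2)
    (Ψ : ℝ → ℝ) (hΨ : ContDiff ℝ 2 Ψ)
    (heq : ∀ z : ℝ, deriv W (Ψ z) - γ * deriv (deriv Ψ) z = 0)
    (hd0 : Tendsto (deriv Ψ) atTop (nhds 0)) (hd0' : Tendsto (deriv Ψ) atBot (nhds 0))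
    (hp : Tendsto Ψ atTop (nhds 1)) (hm : Tendsto Ψ atBot (nhds (-1))) :
    ∀ z : ℝ, (-1 < Ψ z ∧ Ψ z < 1) ∧
      deriv Ψ z = Real.sqrt (2 / γ) * (1 - (Ψ z) ^ 2) := by
  -- Regularity
  have hΨd : Differentiable ℝ Ψ := hΨ.differentiable (by norm_num)
  have h1 : ContDiff ℝ 1 (deriv Ψ) := by
    have h2 : (2 : WithTop ℕ∞) = 1 + 1 := by norm_num
    rw [h2] at hΨ
    exact (contDiff_succ_iff_deriv.mp hΨ).2.2
  have hΨ'd : Differentiable ℝ (deriv Ψ) := h1.differentiable (by norm_num)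
  have hΨ'c : Continuous (deriv Ψ) := hΨ'd.continuous
  -- Derivative of W
  have hW' : ∀ x : ℝ, deriv W x = 4 * x ^ 3 - 4 * x := by
    intro x
    have h1' : HasDerivAt (fun x : ℝ => (x - 1) ^ 2) (2 * (x - 1) ^ 1 * 1) x :=
      ((hasDerivAt_id x).sub_const 1).pow 2
    have h2' : HasDerivAt (fun x : ℝ => (x + 1) ^ 2) (2 * (x + 1) ^ 1 * 1) x :=
      ((hasDerivAt_id x).add_const 1).pow 2
    have h3 := h1'.mul h2'
    have h4 : HasDerivAt W (4 * x ^ 3 - 4 * x) x := by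
      rw [hW]; refine h3.congr_deriv (Eq.symm ?_); ring
    exact h4.deriv
  have hode : ∀ z : ℝ, γ * deriv (deriv Ψ) z = 4 * (Ψ z) ^ 3 - 4 * Ψ z := by
    intro z
    have := heq z
    rw [hW' (Ψ z)] at this
    linarith
  -- Energy identity: E = γ/2 Ψ'² - (Ψ²-1)² is constant and zero
  set E : ℝ → ℝ := fun z => γ / 2 * (deriv Ψ z) ^ 2 - ((Ψ z) ^ 2 - 1) ^ 2 with hE
  have hEd : ∀ z, HasDerivAt E 0 z := by
    intro z
    have hdz : HasDerivAt Ψ (deriv Ψ z) z := (hΨd z).hasDerivAt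
    have hddz : HasDerivAt (deriv Ψ) (deriv (deriv Ψ) z) z := (hΨ'd z).hasDerivAt
    have hA : HasDerivAt (fun z => γ / 2 * (deriv Ψ z) ^ 2)
        (γ / 2 * (2 * (deriv Ψ z) ^ 1 * deriv (deriv Ψ) z)) z :=
      (hddz.pow 2).const_mul (γ / 2)
    have hB : HasDerivAt (fun z => ((Ψ z) ^ 2 - 1) ^ 2)
        (2 * ((Ψ z) ^ 2 - 1) ^ 1 * (2 * (Ψ z) ^ 1 * deriv Ψ z)) z :=
      ((hdz.pow 2).sub_const 1).pow 2
    have h5 := hA.sub hB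
    refine h5.congr_deriv (Eq.symm ?_)
    linear_combination (-(deriv Ψ z)) * hode z
  have hEc : ∀ z, E z = E 0 :=
    fun z => is_const_of_deriv_eq_zero
      (fun x => (hEd x).differentiableAt) (fun x => (hEd x).deriv) z 0
  have hlim : Tendsto E atTop (nhds (γ / 2 * 0 ^ 2 - ((1:ℝ) ^ 2 - 1) ^ 2)) :=
    (((hd0.pow 2).const_mul (γ / 2)).sub (((hp.pow 2).sub_const 1).pow 2))
  have hE0 : E 0 = 0 := by
    have h6 : Tendsto E atTop (nhds (E 0)) :=
      (tendsto_const_nhds (α := ℝ) (x := E 0)).congr fun z => (hEc z).symm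
    have h7 := tendsto_nhds_unique h6 hlim
    rw [h7]; norm_num
  have hkey : ∀ z : ℝ, γ / 2 * (deriv Ψ z) ^ 2 = ((Ψ z) ^ 2 - 1) ^ 2 := by
    intro z
    have h8 := hEc z
    rw [hE0] at h8
    simp only [hE] at h8
    linarith
  -- Upper bound: Ψ ≤ 1
  have hle : ∀ z : ℝ, Ψ z ≤ 1 := by
    by_contra hcon
    push_neg at hcon
    obtain ⟨z₀, hz₀⟩ := hcon
    have hM : (1 : ℝ) < Ψ z₀ := hz₀
    have h1' : ∀ᶠ z in atTop, Ψ z < Ψ z₀ := hp.eventually_lt_const hM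
    have h2' : ∀ᶠ z in atBot, Ψ z < Ψ z₀ := hm.eventually_lt_const (by linarith)
    obtain ⟨R₁, hR₁⟩ := eventually_atTop.mp h1'
    obtain ⟨R₂, hR₂⟩ := eventually_atBot.mp h2'
    set a := min R₂ z₀ with ha
    set b := max R₁ z₀ with hb
    have hz₀m : z₀ ∈ Set.Icc a b := ⟨min_le_right _ _, le_max_right _ _⟩
    obtain ⟨zs, hzs, hmax⟩ := isCompact_Icc.exists_isMaxOn ⟨z₀, hz₀m⟩
      (hΨd.continuous.continuousOn (s := Set.Icc a b))
    have hglob : ∀ z : ℝ, Ψ z ≤ Ψ zs := by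
      intro z
      by_cases hz : z ∈ Set.Icc a b
      · exact hmax hz
      · rcases lt_or_ge z a with h | h
        · have : z ≤ R₂ := le_of_lt (lt_of_lt_of_le h (min_le_left _ _))
          exact le_trans (hR₂ z this).le (hmax hz₀m)
        · have hzb : b < z := by
            rcases lt_or_ge b z with h' | h'
            · exact h'
            · exact absurd ⟨h, h'⟩ hz
          have : R₁ ≤ z := le_trans (le_max_left _ _) hzb.le
          exact le_trans (hR₁ z this).le (hmax hz₀m)
    have hloc : IsLocalMax Ψ zs :=
      (isMaxOn_univ_iff.mpr hglob).isLocalMax Filter.univ_mem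
    have hdz0 : deriv Ψ zs = 0 := hloc.deriv_eq_zero
    have hk := hkey zs
    rw [hdz0] at hk
    have h7 : Ψ z₀ ≤ Ψ zs := hglob z₀
    have h8 : (1 : ℝ) < Ψ zs := lt_of_lt_of_le hM h7
    have h9 : 0 < Ψ zs ^ 2 - 1 := by nlinarith
    have h10 := pow_pos h9 2
    norm_num at hk
    linarith
  -- Lower bound: -1 ≤ Ψ
  have hge : ∀ z : ℝ, -1 ≤ Ψ z := by
    by_contra hcon
    push_neg at hcon
    obtain ⟨z₀, hz₀⟩ := hcon
    have hM : Ψ z₀ < -1 := hz₀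
    have h1' : ∀ᶠ z in atTop, Ψ z₀ < Ψ z := hp.eventually_const_lt (by linarith)
    have h2' : ∀ᶠ z in atBot, Ψ z₀ < Ψ z := hm.eventually_const_lt hM
    obtain ⟨R₁, hR₁⟩ := eventually_atTop.mp h1'
    obtain ⟨R₂, hR₂⟩ := eventually_atBot.mp h2'
    set a := min R₂ z₀ with ha
    set b := max R₁ z₀ with hb
    have hz₀m : z₀ ∈ Set.Icc a b := ⟨min_le_right _ _, le_max_right _ _⟩
    obtain ⟨zs, hzs, hmin⟩ := isCompact_Icc.exists_isMinOn ⟨z₀, hz₀m⟩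
      (hΨd.continuous.continuousOn (s := Set.Icc a b))
    have hglob : ∀ z : ℝ, Ψ zs ≤ Ψ z := by
      intro z
      by_cases hz : z ∈ Set.Icc a b
      · exact hmin hz
      · rcases lt_or_ge z a with h | h
        · have : z ≤ R₂ := le_of_lt (lt_of_lt_of_le h (min_le_left _ _))
          exact le_trans (hmin hz₀m) (hR₂ z this).le
        · have hzb : b < z := by
            rcases lt_or_ge b z with h' | h'
            · exact h'
            · exact absurd ⟨h, h'⟩ hz
          have : R₁ ≤ z := le_trans (le_max_left _ _) hzb.le
          exact le_trans (hmin hz₀m) (hR₁ z this).le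
    have hloc : IsLocalMin Ψ zs :=
      (isMinOn_univ_iff.mpr hglob).isLocalMin Filter.univ_mem
    have hdz0 : deriv Ψ zs = 0 := hloc.deriv_eq_zero
    have hk := hkey zs
    rw [hdz0] at hk
    have h7 : Ψ zs ≤ Ψ z₀ := hglob z₀
    have h8 : Ψ zs < -1 := lt_of_le_of_lt h7 hM
    have h9 : 0 < Ψ zs ^ 2 - 1 := by nlinarith
    have h10 := pow_pos h9 2
    norm_num at hk
    linarith
  -- useful constants
  have hsqc : Real.sqrt (2 / γ) ^ 2 = 2 / γ := Real.sq_sqrt (by positivity)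
  have hderivsq : ∀ x : ℝ, (deriv Ψ x) ^ 2 = 2 / γ * ((Ψ x) ^ 2 - 1) ^ 2 := by
    intro x
    have hk := hkey x
    field_simp at hk ⊢
    linarith
  -- Strictness: Ψ < 1
  have hlt : ∀ z : ℝ, Ψ z < 1 := by
    intro z
    rcases lt_or_eq_of_le (hle z) with h | h
    · exact h
    exfalso
    set K : ℝ := Real.sqrt (2 / γ) * 2 with hK
    have hKnn : 0 ≤ K := mul_nonneg (Real.sqrt_nonneg _) (by norm_num)
    have hd : ∀ x, HasDerivAt (fun t => 1 - Ψ t) (-deriv Ψ x) x := by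
      intro x
      simpa using ((hΨd x).hasDerivAt).const_sub 1
    have hb : ∀ x, |(-deriv Ψ x)| ≤ K * |1 - Ψ x| := by
      intro x
      rw [abs_neg]
      have hKv : 0 ≤ K * |1 - Ψ x| := mul_nonneg hKnn (abs_nonneg _)
      have hsq2 : (deriv Ψ x) ^ 2 ≤ (K * |1 - Ψ x|) ^ 2 := by
        have h2 : (K * |1 - Ψ x|) ^ 2 = 2 / γ * 4 * (1 - Ψ x) ^ 2 := by
          rw [mul_pow, mul_pow, hsqc, sq_abs]
          ring
        rw [hderivsq x, h2]
        have h3 : ((Ψ x) ^ 2 - 1) ^ 2 ≤ 4 * (1 - Ψ x) ^ 2 := by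
          have hq : 0 ≤ 4 - (1 + Ψ x) ^ 2 := by nlinarith [hle x, hge x]
          nlinarith [mul_nonneg (sq_nonneg (1 - Ψ x)) hq]
        have h4 : (0:ℝ) ≤ 2 / γ := by positivity
        nlinarith [h3, h4]
      exact abs_le_of_sq_le_sq hsq2 hKv
    have h0 : 1 - Ψ z = 0 := by linarith
    have hall := gronwall_zero_aux hd hb h0
    have hconst : ∀ t, Ψ t = 1 := fun t => by linarith [hall t]
    have hT : Tendsto Ψ atBot (nhds 1) :=
      (tendsto_const_nhds (α := ℝ) (x := (1:ℝ))).congr fun t => (hconst t).symm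
    have huniq := tendsto_nhds_unique hT hm
    norm_num at huniq
  -- Strictness: -1 < Ψ
  have hgt : ∀ z : ℝ, -1 < Ψ z := by
    intro z
    rcases lt_or_eq_of_le (hge z) with h | h
    · exact h
    exfalso
    set K : ℝ := Real.sqrt (2 / γ) * 2 with hK
    have hKnn : 0 ≤ K := mul_nonneg (Real.sqrt_nonneg _) (by norm_num)
    have hd : ∀ x, HasDerivAt (fun t => Ψ t + 1) (deriv Ψ x) x := by
      intro x
      simpa using ((hΨd x).hasDerivAt).add_const 1
    have hb : ∀ x, |deriv Ψ x| ≤ K * |Ψ x + 1| := by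
      intro x
      have hKv : 0 ≤ K * |Ψ x + 1| := mul_nonneg hKnn (abs_nonneg _)
      have hsq2 : (deriv Ψ x) ^ 2 ≤ (K * |Ψ x + 1|) ^ 2 := by
        have h2 : (K * |Ψ x + 1|) ^ 2 = 2 / γ * 4 * (Ψ x + 1) ^ 2 := by
          rw [mul_pow, mul_pow, hsqc, sq_abs]
          ring
        rw [hderivsq x, h2]
        have h3 : ((Ψ x) ^ 2 - 1) ^ 2 ≤ 4 * (Ψ x + 1) ^ 2 := by
          have hq : 0 ≤ 4 - (Ψ x - 1) ^ 2 := by nlinarith [hle x, hge x]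
          nlinarith [mul_nonneg (sq_nonneg (Ψ x + 1)) hq]
        have h4 : (0:ℝ) ≤ 2 / γ := by positivity
        nlinarith [h3, h4]
      exact abs_le_of_sq_le_sq hsq2 hKv
    have h0 : Ψ z + 1 = 0 := by linarith
    have hall := gronwall_zero_aux hd hb h0
    have hconst : ∀ t, Ψ t = -1 := fun t => by linarith [hall t]
    have hT : Tendsto Ψ atTop (nhds (-1)) :=
      (tendsto_const_nhds (α := ℝ) (x := (-1:ℝ))).congr fun t => (hconst t).symm
    have huniq := tendsto_nhds_unique hT hp
    norm_num at huniq
  -- Sign of the derivative: connectedness argument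
  have hsign : ∀ z : ℝ, deriv Ψ z = Real.sqrt (2 / γ) * (1 - (Ψ z) ^ 2) := by
    set c : ℝ := Real.sqrt (2 / γ) with hc
    have hcpos : 0 < c := Real.sqrt_pos.mpr (by positivity)
    have hWpos : ∀ z : ℝ, 0 < 1 - (Ψ z) ^ 2 := by
      intro z
      nlinarith [hlt z, hgt z]
    have hprod : ∀ z : ℝ, (deriv Ψ z - c * (1 - (Ψ z) ^ 2)) *
        (deriv Ψ z + c * (1 - (Ψ z) ^ 2)) = 0 := by
      intro z
      have hexp : (deriv Ψ z - c * (1 - (Ψ z) ^ 2)) * (deriv Ψ z + c * (1 - (Ψ z) ^ 2))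
          = (deriv Ψ z) ^ 2 - c ^ 2 * (1 - (Ψ z) ^ 2) ^ 2 := by ring
      rw [hexp, hsqc, hderivsq z]
      ring
    set g : ℝ → ℝ := fun z => deriv Ψ z - c * (1 - (Ψ z) ^ 2) with hg
    have hgc : Continuous g :=
      hΨ'c.sub (continuous_const.mul (continuous_const.sub ((hΨd.continuous).pow 2)))
    set A : Set ℝ := g ⁻¹' {0} with hA
    have hAclosed : IsClosed A := isClosed_singleton.preimage hgc
    have hAopen : IsOpen A := by
      have hcompl : A = {z | deriv Ψ z + c * (1 - (Ψ z) ^ 2) = 0}ᶜ := by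
        ext z
        constructor
        · intro hz hz'
          simp only [hA, Set.mem_preimage, Set.mem_singleton_iff, hg] at hz
          simp only [Set.mem_setOf_eq] at hz'
          nlinarith [hz, hz', hWpos z, hcpos]
        · intro hz
          simp only [Set.mem_compl_iff, Set.mem_setOf_eq] at hz
          simp only [hA, Set.mem_preimage, Set.mem_singleton_iff, hg]
          rcases mul_eq_zero.mp (hprod z) with h | h
          · exact h
          · exact absurd h hz
      rw [hcompl]
      have hhc : Continuous (fun z => deriv Ψ z + c * (1 - (Ψ z) ^ 2)) :=
        hΨ'c.add (continuous_const.mul (continuous_const.sub ((hΨd.continuous).pow 2)))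
      exact (isClosed_singleton.preimage hhc).isOpen_compl
    have hclopen : IsClopen A := ⟨hAclosed, hAopen⟩
    rcases (isClopen_iff.mp hclopen) with hAe | hAu
    · exfalso
      have hneg : ∀ z : ℝ, deriv Ψ z ≤ 0 := by
        intro z
        have hzA : z ∉ A := by rw [hAe]; exact Set.notMem_empty z
        have hzero : deriv Ψ z + c * (1 - (Ψ z) ^ 2) = 0 := by
          rcases mul_eq_zero.mp (hprod z) with h | h
          · exact absurd h hzA
          · exact h
        nlinarith [hWpos z, hcpos, hzero]
      have hanti : Antitone Ψ := antitone_of_deriv_nonpos hΨd hneg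
      have hev : ∀ᶠ z in atBot, Ψ 0 ≤ Ψ z :=
        eventually_atBot.mpr ⟨0, fun z hz => hanti hz⟩
      have := ge_of_tendsto hm hev
      linarith [hgt 0]
    · intro z
      have hzA : z ∈ A := by rw [hAu]; trivial
      simp only [hA, Set.mem_preimage, Set.mem_singleton_iff, hg] at hzA
      linarith
  exact fun z => ⟨⟨hgt z, hlt z⟩, hsign z⟩
end

section
/- Fix N ≥ 2, positive atomic masses m₁, …, m_N > 0, constants K > 0 (bulk modulus), n^R > 0 (reference number density), p^R ∈ ℝ (reference pressure), θ > 0 (the product kT of Boltzmann constant and temperature), and reference energies ψ₁^R, …, ψ_N^R ∈ ℝ. Define on the open positive orthant (0,∞)^N the free energy function F(ρ₁,…,ρ_N) = Σ_α ρ_α ψ_α^R + (K − p^R)(1 − n/n^R) + K·(n/n^R)·ln(n/n^R) + θ·Σ_α n_α ln(n_α/n), where n_α = ρ_α/m_α and n = Σ_α n_α. Then F is strictly convex on (0,∞)^N. -/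
open Real

lemma aux_conv {a b u v : ℝ} (hu : 0 ≤ u) (hv : 0 ≤ v)
    (ha : 0 ≤ a) (hb : 0 ≤ b) (hab : a + b = 1) :
    (a*u+b*v) * Real.log (a*u+b*v) ≤ a*(u*Real.log u) + b*(v*Real.log v) := by
  have h := Real.convexOn_mul_log.2 (Set.mem_Ici.2 hu) (Set.mem_Ici.2 hv) ha hb hab
  simpa [smul_eq_mul] using h

lemma aux_strict {a b u v : ℝ} (hu : 0 ≤ u) (hv : 0 ≤ v) (huv : u ≠ v)
    (ha : 0 < a) (hb : 0 < b) (hab : a + b = 1) :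
    (a*u+b*v) * Real.log (a*u+b*v) < a*(u*Real.log u) + b*(v*Real.log v) := by
  have h := Real.strictConvexOn_mul_log.2 (Set.mem_Ici.2 hu) (Set.mem_Ici.2 hv) huv ha hb hab
  simpa [smul_eq_mul] using h

lemma aux_logsum {a b p q s t : ℝ} (ha : 0 < a) (hb : 0 < b)
    (hp : 0 < p) (hq : 0 < q) (hs : 0 < s) (ht : 0 < t) :
    (a*p+b*q) * Real.log ((a*p+b*q)/(a*s+b*t)) ≤
      a*(p*Real.log (p/s)) + b*(q*Real.log (q/t)) := by
  have hD : 0 < a*s+b*t := by positivity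
  have hsum : a*s/(a*s+b*t) + b*t/(a*s+b*t) = 1 := by field_simp
  have h := aux_conv (u := p/s) (v := q/t) (a := a*s/(a*s+b*t)) (b := b*t/(a*s+b*t))
    (by positivity) (by positivity) (by positivity) (by positivity) hsum
  have e1 : a*s/(a*s+b*t)*(p/s) = a*p/(a*s+b*t) := by field_simp
  have e2 : b*t/(a*s+b*t)*(q/t) = b*q/(a*s+b*t) := by field_simp
  rw [e1, e2] at h
  have e3 : a*p/(a*s+b*t) + b*q/(a*s+b*t) = (a*p+b*q)/(a*s+b*t) := by ring
  rw [e3] at h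
  have h2 := mul_le_mul_of_nonneg_left h hD.le
  calc (a*p+b*q) * Real.log ((a*p+b*q)/(a*s+b*t))
      = (a*s+b*t) * ((a*p+b*q)/(a*s+b*t) * Real.log ((a*p+b*q)/(a*s+b*t))) := by
        field_simp
    _ ≤ (a*s+b*t) * (a*s/(a*s+b*t)*(p/s*Real.log (p/s)) + b*t/(a*s+b*t)*(q/t*Real.log (q/t))) := h2
    _ = a*(p*Real.log (p/s)) + b*(q*Real.log (q/t)) := by field_simp

lemma aux_core (N : ℕ) (hN : 0 < N) (u v : Fin N → ℝ) (hu : ∀ α, 0 < u α) (hv : ∀ α, 0 < v α)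
    (huv : u ≠ v) (c t a b : ℝ) (hc : 0 < c) (ht : 0 < t) (ha : 0 < a) (hb : 0 < b)
    (hab : a + b = 1) :
    c * ((a * ∑ α, u α + b * ∑ α, v α) * Real.log (a * ∑ α, u α + b * ∑ α, v α))
      + t * ∑ α, (a * u α + b * v α) * Real.log ((a * u α + b * v α) / (a * ∑ β, u β + b * ∑ β, v β))
    < a * (c * ((∑ α, u α) * Real.log (∑ α, u α)) + t * ∑ α, u α * Real.log (u α / ∑ β, u β))
      + b * (c * ((∑ α, v α) * Real.log (∑ α, v α)) + t * ∑ α, v α * Real.log (v α / ∑ β, v β)) := by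
  obtain rfl : b = 1 - a := by linarith
  haveI : Nonempty (Fin N) := ⟨⟨0, hN⟩⟩
  set U := ∑ α, u α with hUd
  set V := ∑ α, v α with hVd
  have hU : 0 < U := Finset.sum_pos (fun α _ => hu α) Finset.univ_nonempty
  have hV : 0 < V := Finset.sum_pos (fun α _ => hv α) Finset.univ_nonempty
  have hW : 0 < a*U+(1-a)*V := by nlinarith [mul_pos ha hU, mul_pos hb hV]
  by_cases hUV : U = V
  · -- split logs
    have split : ∀ (w s : ℝ), 0 < w → 0 < s →
        w * Real.log (w/s) = w * Real.log w - Real.log s * w := by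
      intro w s hw hs; rw [Real.log_div hw.ne' hs.ne']; ring
    have eZ : ∑ α, (a*u α + (1-a)*v α) * Real.log ((a*u α+(1-a)*v α)/(a*U+(1-a)*V))
        = (∑ α, (a*u α+(1-a)*v α) * Real.log (a*u α+(1-a)*v α))
          - Real.log (a*U+(1-a)*V) * (a*U+(1-a)*V) := by
      rw [Finset.sum_congr rfl (fun α _ => split _ _
        (by nlinarith [mul_pos ha (hu α), mul_pos hb (hv α)]) hW)]
      rw [Finset.sum_sub_distrib, ← Finset.mul_sum]
      congr 1
      rw [hUd, hVd, Finset.sum_add_distrib, ← Finset.mul_sum, ← Finset.mul_sum]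
    have eX : ∑ α, u α * Real.log (u α / U)
        = (∑ α, u α * Real.log (u α)) - Real.log U * U := by
      rw [Finset.sum_congr rfl (fun α _ => split _ _ (hu α) hU)]
      rw [Finset.sum_sub_distrib, ← Finset.mul_sum, hUd]
    have eY : ∑ α, v α * Real.log (v α / V)
        = (∑ α, v α * Real.log (v α)) - Real.log V * V := by
      rw [Finset.sum_congr rfl (fun α _ => split _ _ (hv α) hV)]
      rw [Finset.sum_sub_distrib, ← Finset.mul_sum, hVd]
    rw [eZ, eX, eY]
    obtain ⟨α₀, hα₀⟩ : ∃ α, u α ≠ v α := Function.ne_iff.mp huv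
    have hsum : ∑ α, (a*u α+(1-a)*v α) * Real.log (a*u α+(1-a)*v α)
        < ∑ α, (a*(u α*Real.log (u α)) + (1-a)*(v α*Real.log (v α))) := by
      refine Finset.sum_lt_sum (fun α _ => aux_conv (hu α).le (hv α).le ha.le hb.le (by ring))
        ⟨α₀, Finset.mem_univ _, aux_strict (hu α₀).le (hv α₀).le hα₀ ha hb (by ring)⟩
    have hsum2 : ∑ α, (a*(u α*Real.log (u α)) + (1-a)*(v α*Real.log (v α)))
        = a*(∑ α, u α*Real.log (u α)) + (1-a)*(∑ α, v α*Real.log (v α)) := by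
      rw [Finset.sum_add_distrib, ← Finset.mul_sum, ← Finset.mul_sum]
    rw [hsum2] at hsum
    have hsum' := mul_lt_mul_of_pos_left hsum ht
    rw [← hUV]
    have hWe : a*U+(1-a)*U = U := by ring
    rw [hWe]
    nlinarith [hsum']
  · -- U ≠ V : strict from the c-term
    have hc1 : (a*U+(1-a)*V) * Real.log (a*U+(1-a)*V)
        < a*(U*Real.log U) + (1-a)*(V*Real.log V) :=
      aux_strict hU.le hV.le hUV ha hb (by ring)
    have hcs := mul_lt_mul_of_pos_left hc1 hc
    have hE : ∑ α, (a*u α+(1-a)*v α) * Real.log ((a*u α+(1-a)*v α)/(a*U+(1-a)*V))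
        ≤ a*(∑ α, u α*Real.log (u α/U)) + (1-a)*(∑ α, v α*Real.log (v α/V)) := by
      calc ∑ α, (a*u α+(1-a)*v α) * Real.log ((a*u α+(1-a)*v α)/(a*U+(1-a)*V))
          ≤ ∑ α, (a*(u α*Real.log (u α/U)) + (1-a)*(v α*Real.log (v α/V))) :=
            Finset.sum_le_sum (fun α _ => aux_logsum ha hb (hu α) (hv α) hU hV)
        _ = a*(∑ α, u α*Real.log (u α/U)) + (1-a)*(∑ α, v α*Real.log (v α/V)) := by
            rw [Finset.sum_add_distrib, ← Finset.mul_sum, ← Finset.mul_sum]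
    have hE' := mul_le_mul_of_nonneg_left hE ht.le
    nlinarith [hcs, hE']

/-- The pure-phase free energy
`F(ρ) = Σ ρ_α ψ_α^R + (K - p^R)(1 - n/n^R) + K (n/n^R) ln(n/n^R) + θ Σ n_α ln(n_α/n)`
with `n_α = ρ_α/m_α`, `n = Σ n_α`, is strictly convex on the positive orthant. -/
theorem stmt_13 (N : ℕ) (hN : 2 ≤ N) (m : Fin N → ℝ) (hm : ∀ α : Fin N, 0 < m α)
    (K nR θ : ℝ) (hK : 0 < K) (hnR : 0 < nR) (hθ : 0 < θ)
    (pR : ℝ) (ψR : Fin N → ℝ) (F : (Fin N → ℝ) → ℝ)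
    (hF : ∀ ρ : Fin N → ℝ, F ρ =
      (∑ α, ρ α * ψR α)
      + (K - pR) * (1 - (∑ α, ρ α / m α) / nR)
      + K * ((∑ α, ρ α / m α) / nR) * Real.log ((∑ α, ρ α / m α) / nR)
      + θ * ∑ α, (ρ α / m α) * Real.log ((ρ α / m α) / (∑ β, ρ β / m β))) :
    StrictConvexOn ℝ {ρ : Fin N → ℝ | ∀ α, 0 < ρ α} F := by
  haveI : Nonempty (Fin N) := ⟨⟨0, by omega⟩⟩
  constructor
  · intro x hx y hy a b ha hb hab
    intro α
    have hxa := hx α; have hya := hy α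
    have happ : (a • x + b • y) α = a * x α + b * y α := by
      simp [smul_eq_mul]
    rw [Set.mem_setOf_eq] at *
    show 0 < (a • x + b • y) α
    rw [happ]
    rcases ha.lt_or_eq with h | h
    · exact add_pos_of_pos_of_nonneg (mul_pos h hxa) (mul_nonneg hb hya.le)
    · have hb1 : b = 1 := by linarith
      rw [← h, hb1]; simpa using hya
  · intro x hx y hy hxy a b ha hb hab
    simp only [Set.mem_setOf_eq] at hx hy
    obtain rfl : b = 1 - a := by linarith
    have hb' : (0:ℝ) < 1 - a := hb
    have hdiv : ∀ α, (a • x + (1-a) • y) α / m α = a * (x α / m α) + (1-a) * (y α / m α) := by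
      intro α
      have : (a • x + (1-a) • y) α = a * x α + (1-a) * y α := by simp [smul_eq_mul]
      rw [this, add_div, mul_div_assoc, mul_div_assoc]
    have hsz : (∑ α, (a • x + (1-a) • y) α / m α)
        = a * (∑ α, x α / m α) + (1-a) * (∑ α, y α / m α) := by
      simp_rw [hdiv]
      rw [Finset.sum_add_distrib, ← Finset.mul_sum, ← Finset.mul_sum]
    rw [hF, hF, hF]
    simp only [hdiv]
    have hsz2 : (∑ α, (a * (x α / m α) + (1-a) * (y α / m α)))
        = a * (∑ α, x α / m α) + (1-a) * (∑ α, y α / m α) := by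
      rw [Finset.sum_add_distrib, ← Finset.mul_sum, ← Finset.mul_sum]
    simp only [hsz2, smul_eq_mul]
    have hu : ∀ α, 0 < x α / m α := fun α => div_pos (hx α) (hm α)
    have hv : ∀ α, 0 < y α / m α := fun α => div_pos (hy α) (hm α)
    have hsx : 0 < ∑ α, x α / m α := Finset.sum_pos (fun α _ => hu α) Finset.univ_nonempty
    have hsy : 0 < ∑ α, y α / m α := Finset.sum_pos (fun α _ => hv α) Finset.univ_nonempty
    have hszpos : 0 < a * (∑ α, x α / m α) + (1-a) * (∑ α, y α / m α) := by
      nlinarith [mul_pos ha hsx, mul_pos hb' hsy]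
    have hlin : (∑ α, (a • x + (1-a) • y) α * ψR α)
        = a * (∑ α, x α * ψR α) + (1-a) * (∑ α, y α * ψR α) := by
      have : ∀ α, (a • x + (1-a) • y) α * ψR α
          = a * (x α * ψR α) + (1-a) * (y α * ψR α) := by
        intro α
        have : (a • x + (1-a) • y) α = a * x α + (1-a) * y α := by simp [smul_eq_mul]
        rw [this]; ring
      simp_rw [this]
      rw [Finset.sum_add_distrib, ← Finset.mul_sum, ← Finset.mul_sum]
    have hKs : ∀ s : ℝ, 0 < s → K * (s/nR) * Real.log (s/nR)
        = (K/nR) * (s * Real.log s) - (K/nR) * Real.log nR * s := by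
      intro s hs; rw [Real.log_div hs.ne' hnR.ne']; field_simp
    have hKz := hKs _ hszpos
    have hKx := hKs _ hsx
    have hKy := hKs _ hsy
    have huv : (fun α => x α / m α) ≠ (fun α => y α / m α) := by
      intro h
      apply hxy
      funext α
      have h2 := congrFun h α
      have hmα := (hm α).ne'
      field_simp at h2
      exact h2
    have hcore := aux_core N (by omega) (fun α => x α / m α) (fun α => y α / m α)
      hu hv huv (K/nR) θ a (1-a) (by positivity) hθ ha hb' (by ring)
    beta_reduce at hcore
    have hA : (K - pR) * (1 - (a * (∑ α, x α / m α) + (1-a) * (∑ α, y α / m α))/nR)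
        = a * ((K - pR) * (1 - (∑ α, x α / m α)/nR))
          + (1-a) * ((K - pR) * (1 - (∑ α, y α / m α)/nR)) := by ring
    have hB : (K/nR) * Real.log nR * (a * (∑ α, x α / m α) + (1-a) * (∑ α, y α / m α))
        = a * ((K/nR) * Real.log nR * (∑ α, x α / m α))
          + (1-a) * ((K/nR) * Real.log nR * (∑ α, y α / m α)) := by ring
    rw [hlin, hKz, hKx, hKy, hA]
    linarith [hcore, hB]
end

section
/- With the assumptions and notation of the previous statement (N ≥ 2, m_α > 0, K > 0, n^R > 0, p^R ∈ ℝ, θ > 0, ψ_α^R ∈ ℝ, and F(ρ₁,…,ρ_N) = Σ_α ρ_α ψ_α^R + (K − p^R)(1 − n/n^R) + K·(n/n^R)·ln(n/n^R) + θ·Σ_α n_α ln(n_α/n), n_α = ρ_α/m_α, n = Σ_α n_α, defined on (0,∞)^N), the chemical potential map μ : (0,∞)^N → ℝ^N given by μ_α(ρ) = ∂F/∂ρ_α(ρ) is injective, and at every point ρ ∈ (0,∞)^N the Hessian matrix (∂²F/∂ρ_β∂ρ_γ)(ρ) = (∂μ_β/∂ρ_γ)(ρ) is symmetric positive definite, hence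 invertible. -/
open Real Matrix Filter

namespace Stmt14

noncomputable section

variable {N : ℕ}

def nsum (m ρ : Fin N → ℝ) : ℝ := ∑ α, ρ α / m α

def pL (m : Fin N → ℝ) (α : Fin N) : (Fin N → ℝ) →L[ℝ] ℝ :=
  (m α)⁻¹ • ContinuousLinearMap.proj α

def nL (m : Fin N → ℝ) : (Fin N → ℝ) →L[ℝ] ℝ := ∑ α, pL m α

lemma pL_apply (m : Fin N → ℝ) (α : Fin N) (v : Fin N → ℝ) : pL m α v = v α / m α := by
  simp [pL, div_eq_mul_inv, mul_comm]

lemma nL_apply (m : Fin N → ℝ) (v : Fin N → ℝ) : nL m v = nsum m v := by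
  simp [nL, nsum, ContinuousLinearMap.sum_apply, pL_apply]

lemma hasFDerivAt_nsum (m : Fin N → ℝ) (ρ : Fin N → ℝ) : HasFDerivAt (nsum m) (nL m) ρ := by
  have h : nsum m = ⇑(nL m) := funext fun v => (nL_apply m v).symm
  rw [h]; exact (nL m).hasFDerivAt

lemma hasFDerivAt_coord (m : Fin N → ℝ) (α : Fin N) (ρ : Fin N → ℝ) :
    HasFDerivAt (fun x : Fin N → ℝ => x α / m α) (pL m α) ρ := by
  have h : (fun x : Fin N → ℝ => x α / m α) = ⇑(pL m α) := funext fun v => (pL_apply m α v).symm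
  rw [h]; exact (pL m α).hasFDerivAt

lemma nsum_pos [NeZero N] (m ρ : Fin N → ℝ) (hm : ∀ α, 0 < m α) (hρ : ∀ α, 0 < ρ α) :
    0 < nsum m ρ :=
  Finset.sum_pos (fun α _ => div_pos (hρ α) (hm α)) Finset.univ_nonempty

def Mu (m : Fin N → ℝ) (K nR θ pR : ℝ) (ψR : Fin N → ℝ) (γ : Fin N) (ρ : Fin N → ℝ) : ℝ :=
  ψR γ + (m γ)⁻¹ * (-(K - pR) / nR + K / nR * (Real.log (nsum m ρ) + 1 - Real.log nR)
    + θ * (Real.log (ρ γ / m γ) - Real.log (nsum m ρ)))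

def Fdef (m : Fin N → ℝ) (K nR θ pR : ℝ) (ψR : Fin N → ℝ) (ρ : Fin N → ℝ) : ℝ :=
  (∑ α, ρ α * ψR α)
  + (K - pR) * (1 - (∑ α, ρ α / m α) / nR)
  + K * ((∑ α, ρ α / m α) / nR) * Real.log ((∑ α, ρ α / m α) / nR)
  + θ * ∑ α, (ρ α / m α) * Real.log ((ρ α / m α) / (∑ β, ρ β / m β))

def Gdef (m : Fin N → ℝ) (K nR θ pR : ℝ) (ψR : Fin N → ℝ) (ρ : Fin N → ℝ) : ℝ :=
  (∑ α, ρ α * ψR α)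
  + (K - pR) * (1 - nsum m ρ / nR)
  + K / nR * (nsum m ρ * Real.log (nsum m ρ) - nsum m ρ * Real.log nR)
  + θ * ((∑ α, (ρ α / m α) * Real.log (ρ α / m α)) - nsum m ρ * Real.log (nsum m ρ))

lemma F_eq_G [NeZero N] (m : Fin N → ℝ) (hm : ∀ α, 0 < m α) (K nR θ pR : ℝ) (hnR : 0 < nR)
    (ψR : Fin N → ℝ) (ρ : Fin N → ℝ) (hρ : ∀ α, 0 < ρ α) :
    Fdef m K nR θ pR ψR ρ = Gdef m K nR θ pR ψR ρ := by
  have hn := nsum_pos m ρ hm hρ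
  unfold Fdef Gdef nsum
  rw [Real.log_div (by exact (show (0:ℝ) < ∑ α, ρ α / m α from hn).ne') hnR.ne']
  have h2 : ∀ α : Fin N, (ρ α / m α) * Real.log ((ρ α / m α) / (∑ β, ρ β / m β)) =
      (ρ α / m α) * Real.log (ρ α / m α) - (ρ α / m α) * Real.log (∑ β, ρ β / m β) := by
    intro α
    rw [Real.log_div (div_pos (hρ α) (hm α)).ne' (show (0:ℝ) < ∑ β, ρ β / m β from hn).ne']
    ring
  rw [Finset.sum_congr rfl fun α _ => h2 α, Finset.sum_sub_distrib, ← Finset.sum_mul]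
  ring

end
end Stmt14

namespace Stmt14
noncomputable section
variable {N : ℕ}

lemma isOpen_pos : IsOpen {x : Fin N → ℝ | ∀ α, 0 < x α} := by
  have h : {x : Fin N → ℝ | ∀ α, 0 < x α} = ⋂ α, {x | 0 < x α} := by ext; simp
  rw [h]; exact isOpen_iInter_of_finite fun α => isOpen_lt continuous_const (continuous_apply α)

lemma nL_single (m : Fin N → ℝ) (γ : Fin N) : nL m (Pi.single γ 1) = (m γ)⁻¹ := by
  rw [nL_apply]
  simp [nsum, Pi.single_apply, Finset.sum_ite_eq', ite_div]

lemma pL_single (m : Fin N → ℝ) (α γ : Fin N) :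
    pL m α (Pi.single γ 1) = if α = γ then (m α)⁻¹ else 0 := by
  rw [pL_apply, Pi.single_apply]
  split_ifs <;> simp

lemma fderiv_Fdef [NeZero N] (m : Fin N → ℝ) (hm : ∀ α, 0 < m α) (K nR θ pR : ℝ)
    (hnR : 0 < nR) (ψR : Fin N → ℝ) (ρ : Fin N → ℝ) (hρ : ∀ α, 0 < ρ α) (γ : Fin N) :
    fderiv ℝ (Fdef m K nR θ pR ψR) ρ (Pi.single γ 1) = Mu m K nR θ pR ψR γ ρ := by
  have hn := nsum_pos m ρ hm hρ
  have hev : Fdef m K nR θ pR ψR =ᶠ[nhds ρ] (fun x =>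
      (∑ α, x α * ψR α) + (K - pR) * (1 - nsum m x / nR)
      + K / nR * (nsum m x * Real.log (nsum m x) - nsum m x * Real.log nR)
      + θ * ((∑ α, (x α / m α) * Real.log (x α / m α)) - nsum m x * Real.log (nsum m x))) :=
    Filter.eventually_of_mem (isOpen_pos.mem_nhds hρ)
      (fun x hx => F_eq_G m hm K nR θ pR hnR ψR x hx)
  have h1 : HasFDerivAt (fun x : Fin N → ℝ => ∑ α, x α * ψR α)
      (∑ α, ψR α • (ContinuousLinearMap.proj α : (Fin N → ℝ) →L[ℝ] ℝ)) ρ := by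
    apply HasFDerivAt.fun_sum
    intro α _
    exact (ContinuousLinearMap.proj α : (Fin N → ℝ) →L[ℝ] ℝ).hasFDerivAt.mul_const (ψR α)
  have h2 := (((hasFDerivAt_nsum m ρ).mul_const nR⁻¹).const_sub 1).const_mul (K - pR)
  have hmul_log := (Real.hasDerivAt_mul_log hn.ne').comp_hasFDerivAt ρ (hasFDerivAt_nsum m ρ)
  have h3 := (hmul_log.sub ((hasFDerivAt_nsum m ρ).mul_const (Real.log nR))).const_mul (K / nR)
  have hα : ∀ α : Fin N, HasFDerivAt (fun x : Fin N → ℝ => (x α / m α) * Real.log (x α / m α))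
      ((Real.log (ρ α / m α) + 1) • pL m α) ρ := fun α =>
    by
      have := (Real.hasDerivAt_mul_log (div_pos (hρ α) (hm α)).ne').comp_hasFDerivAt ρ
        (hasFDerivAt_coord m α ρ)
      exact this
  have h4 := ((HasFDerivAt.fun_sum (fun α (_ : α ∈ Finset.univ) => hα α)).sub hmul_log).const_mul θ
  have hG := ((h1.add h2).add h3).add h4
  have hF' := hG.congr_of_eventuallyEq hev
  rw [hF'.fderiv]
  simp only [ContinuousLinearMap.add_apply, ContinuousLinearMap.smul_apply,
    ContinuousLinearMap.coe_sub', Pi.sub_apply, ContinuousLinearMap.neg_apply, ContinuousLinearMap.coe_sum',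
    Finset.sum_apply, smul_eq_mul, nL_single, pL_single, ContinuousLinearMap.proj_apply,
    Pi.single_apply, mul_ite, mul_zero, Finset.sum_ite_eq', Finset.mem_univ, if_true]
  unfold Mu
  field_simp [hnR.ne']
  rw [div_eq_inv_mul (ρ γ) (m γ)]
  ring

end
end Stmt14

namespace Stmt14
noncomputable section
variable {N : ℕ}

def Hess (m : Fin N → ℝ) (K nR θ : ℝ) (ρ : Fin N → ℝ) (β γ : Fin N) : ℝ :=
  (m β)⁻¹ * (K / nR * (nsum m ρ)⁻¹ * (m γ)⁻¹
    + θ * ((if β = γ then (ρ β)⁻¹ else 0) - (nsum m ρ)⁻¹ * (m γ)⁻¹))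

lemma fderiv_Mu [NeZero N] (m : Fin N → ℝ) (hm : ∀ α, 0 < m α) (K nR θ pR : ℝ)
    (ψR : Fin N → ℝ) (ρ : Fin N → ℝ) (hρ : ∀ α, 0 < ρ α) (β γ : Fin N) :
    fderiv ℝ (Mu m K nR θ pR ψR β) ρ (Pi.single γ 1) = Hess m K nR θ ρ β γ := by
  have hn := nsum_pos m ρ hm hρ
  have hlogn := (Real.hasDerivAt_log hn.ne').comp_hasFDerivAt ρ (hasFDerivAt_nsum m ρ)
  have hlogβ := (Real.hasDerivAt_log (div_pos (hρ β) (hm β)).ne').comp_hasFDerivAt ρ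
    (hasFDerivAt_coord m β ρ)
  have h3 := ((hlogn.add_const 1).sub_const (Real.log nR)).const_mul (K / nR)
  have h4 := (hlogβ.sub hlogn).const_mul θ
  have h5 := ((h3.const_add (-(K - pR) / nR)).add h4).const_mul (m β)⁻¹
  have h6 := h5.const_add (ψR β)
  have h7 : HasFDerivAt (Mu m K nR θ pR ψR β)
      ((m β)⁻¹ • ((K / nR) • ((nsum m ρ)⁻¹ • nL m)
        + θ • ((ρ β / m β)⁻¹ • pL m β - (nsum m ρ)⁻¹ • nL m))) ρ := h6
  rw [h7.fderiv]
  simp only [ContinuousLinearMap.smul_apply, ContinuousLinearMap.add_apply,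
    ContinuousLinearMap.coe_sub', Pi.sub_apply, smul_eq_mul, nL_single, pL_single]
  unfold Hess
  split_ifs with h
  · rw [inv_div]
    field_simp [(hm β).ne', (hρ β).ne', hn.ne']
  · ring

lemma fderiv_Fdef2 [NeZero N] (m : Fin N → ℝ) (hm : ∀ α, 0 < m α) (K nR θ pR : ℝ)
    (hnR : 0 < nR) (ψR : Fin N → ℝ) (ρ : Fin N → ℝ) (hρ : ∀ α, 0 < ρ α) (β γ : Fin N) :
    fderiv ℝ (fun x => fderiv ℝ (Fdef m K nR θ pR ψR) x (Pi.single β 1)) ρ (Pi.single γ 1)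
      = Hess m K nR θ ρ β γ := by
  have hev : (fun x => fderiv ℝ (Fdef m K nR θ pR ψR) x (Pi.single β 1))
      =ᶠ[nhds ρ] Mu m K nR θ pR ψR β :=
    Filter.eventually_of_mem (isOpen_pos.mem_nhds hρ)
      (fun x hx => fderiv_Fdef m hm K nR θ pR hnR ψR x hx β)
  rw [hev.fderiv_eq]
  exact fderiv_Mu m hm K nR θ pR ψR ρ hρ β γ

lemma one_sub_inv_le_log {x : ℝ} (hx : 0 < x) : 1 - x⁻¹ ≤ Real.log x := by
  have h := Real.log_le_sub_one_of_pos (inv_pos.mpr hx)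
  rw [Real.log_inv] at h
  linarith

lemma log_sum_one_side (a b : Fin N → ℝ) (ha : ∀ i, 0 < a i) (hb : ∀ i, 0 < b i)
    (hA : 0 < ∑ i, a i) (hB : 0 < ∑ i, b i) :
    (∑ i, a i) * (Real.log (∑ i, a i) - Real.log (∑ i, b i))
      ≤ ∑ i, a i * (Real.log (a i) - Real.log (b i)) := by
  set A := ∑ i, a i
  set B := ∑ i, b i
  have key : ∀ i : Fin N, a i * (Real.log A - Real.log B) + (a i - b i * A / B)
      ≤ a i * (Real.log (a i) - Real.log (b i)) := by
    intro i
    have ht : 0 < a i * B / (b i * A) :=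
      div_pos (mul_pos (ha i) hB) (mul_pos (hb i) hA)
    have hlog := one_sub_inv_le_log ht
    have hlogeq : Real.log (a i * B / (b i * A)) =
        Real.log (a i) - Real.log (b i) - (Real.log A - Real.log B) := by
      rw [Real.log_div (mul_pos (ha i) hB).ne' (mul_pos (hb i) hA).ne',
        Real.log_mul (ha i).ne' hB.ne', Real.log_mul (hb i).ne' hA.ne']
      ring
    have hinv : (a i * B / (b i * A))⁻¹ = b i * A / (a i * B) := by
      rw [inv_div]
    rw [hlogeq, hinv] at hlog
    have := mul_le_mul_of_nonneg_left hlog (ha i).le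
    have hcancel : a i * (1 - b i * A / (a i * B)) = a i - b i * A / B := by
      field_simp [(ha i).ne', hB.ne']
    rw [hcancel] at this
    linarith
  calc A * (Real.log A - Real.log B)
      = ∑ i, (a i * (Real.log A - Real.log B) + (a i - b i * A / B)) := by
        rw [Finset.sum_add_distrib, ← Finset.sum_mul, Finset.sum_sub_distrib,
          ← Finset.sum_div, ← Finset.sum_mul]
        rw [mul_div_cancel_left₀ _ hB.ne']
        ring
    _ ≤ ∑ i, a i * (Real.log (a i) - Real.log (b i)) := Finset.sum_le_sum fun i _ => key i

lemma log_sum_ineq (a b : Fin N → ℝ) (ha : ∀ i, 0 < a i) (hb : ∀ i, 0 < b i)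
    (hA : 0 < ∑ i, a i) (hB : 0 < ∑ i, b i) :
    (∑ i, a i - ∑ i, b i) * (Real.log (∑ i, a i) - Real.log (∑ i, b i))
      ≤ ∑ i, (a i - b i) * (Real.log (a i) - Real.log (b i)) := by
  have h1 := log_sum_one_side a b ha hb hA hB
  have h2 := log_sum_one_side b a hb ha hB hA
  have h3 : ∑ i, (a i - b i) * (Real.log (a i) - Real.log (b i))
      = (∑ i, a i * (Real.log (a i) - Real.log (b i)))
        + ∑ i, b i * (Real.log (b i) - Real.log (a i)) := by
    rw [← Finset.sum_add_distrib]
    exact Finset.sum_congr rfl fun i _ => by ring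
  nlinarith [h1, h2, h3]

lemma cs_ineq (m ρ x : Fin N → ℝ) (hm : ∀ α, 0 < m α) (hρ : ∀ α, 0 < ρ α) :
    (∑ β, x β / m β) ^ 2 ≤ (∑ β, x β ^ 2 / (m β * ρ β)) * (∑ β, ρ β / m β) := by
  have h := Finset.sum_mul_sq_le_sq_mul_sq Finset.univ
    (fun β => x β / Real.sqrt (m β * ρ β)) (fun β => Real.sqrt (ρ β / m β))
  have h1 : ∀ β : Fin N, x β / Real.sqrt (m β * ρ β) * Real.sqrt (ρ β / m β) = x β / m β := by
    intro β
    have hmρ : 0 < m β * ρ β := mul_pos (hm β) (hρ β)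
    have hsq : Real.sqrt (ρ β / m β) = Real.sqrt (m β * ρ β) / m β := by
      rw [show ρ β / m β = (m β * ρ β) / (m β) ^ 2 by
        field_simp [(hm β).ne']]
      rw [Real.sqrt_div hmρ.le, Real.sqrt_sq (hm β).le]
    rw [hsq]
    field_simp [Real.sqrt_ne_zero'.mpr hmρ]
  have h2 : ∀ β : Fin N, (x β / Real.sqrt (m β * ρ β)) ^ 2 = x β ^ 2 / (m β * ρ β) := by
    intro β
    rw [div_pow, Real.sq_sqrt (mul_pos (hm β) (hρ β)).le]
  have h3 : ∀ β : Fin N, (Real.sqrt (ρ β / m β)) ^ 2 = ρ β / m β := fun β =>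
    Real.sq_sqrt (div_pos (hρ β) (hm β)).le
  calc (∑ β, x β / m β) ^ 2
      = (∑ β, x β / Real.sqrt (m β * ρ β) * Real.sqrt (ρ β / m β)) ^ 2 := by
        rw [Finset.sum_congr rfl fun β _ => (h1 β)]
    _ ≤ (∑ β, (x β / Real.sqrt (m β * ρ β)) ^ 2) * ∑ β, (Real.sqrt (ρ β / m β)) ^ 2 := h
    _ = (∑ β, x β ^ 2 / (m β * ρ β)) * (∑ β, ρ β / m β) := by
        rw [Finset.sum_congr rfl fun β _ => (h2 β), Finset.sum_congr rfl fun β _ => (h3 β)]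

lemma Hess_symm (m : Fin N → ℝ) (K nR θ : ℝ) (ρ : Fin N → ℝ) (β γ : Fin N) :
    Hess m K nR θ ρ β γ = Hess m K nR θ ρ γ β := by
  unfold Hess
  rcases eq_or_ne β γ with h | h
  · subst h; ring
  · rw [if_neg h, if_neg (Ne.symm h)]; ring

lemma quad_pos [NeZero N] (m : Fin N → ℝ) (hm : ∀ α, 0 < m α) (K nR θ : ℝ)
    (hK : 0 < K) (hnR : 0 < nR) (hθ : 0 < θ) (ρ : Fin N → ℝ) (hρ : ∀ α, 0 < ρ α)
    (x : Fin N → ℝ) (hx : x ≠ 0) :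
    0 < ∑ β, x β * ∑ γ, Hess m K nR θ ρ β γ * x γ := by
  have hA : 0 < nsum m ρ := nsum_pos m ρ hm hρ
  set A := nsum m ρ with hAdef
  set s := ∑ γ, x γ / m γ with hsdef
  set T := ∑ β, x β ^ 2 / (m β * ρ β) with hTdef
  have hrow : ∀ β, ∑ γ, Hess m K nR θ ρ β γ * x γ
      = (m β)⁻¹ * ((K / nR * A⁻¹ - θ * A⁻¹) * s + θ * ((ρ β)⁻¹ * x β)) := by
    intro β
    have hterm : ∀ γ, Hess m K nR θ ρ β γ * x γ
        = (m β)⁻¹ * (K / nR * A⁻¹ - θ * A⁻¹) * (x γ / m γ)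
          + (if β = γ then (m β)⁻¹ * θ * ((ρ β)⁻¹ * x β) else 0) := by
      intro γ
      unfold Hess
      split_ifs with h
      · subst h; ring
      · ring
    rw [Finset.sum_congr rfl fun γ _ => hterm γ, Finset.sum_add_distrib, ← Finset.mul_sum,
      Finset.sum_ite_eq, if_pos (Finset.mem_univ β)]
    ring
  have htot : ∑ β, x β * ∑ γ, Hess m K nR θ ρ β γ * x γ
      = K / nR * A⁻¹ * s ^ 2 + θ * (T - A⁻¹ * s ^ 2) := by
    have hterm : ∀ β, x β * ((m β)⁻¹ * ((K / nR * A⁻¹ - θ * A⁻¹) * s + θ * ((ρ β)⁻¹ * x β)))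
        = (K / nR * A⁻¹ - θ * A⁻¹) * s * (x β / m β) + θ * (x β ^ 2 / (m β * ρ β)) := by
      intro β; ring
    rw [Finset.sum_congr rfl fun β _ => by rw [hrow β, hterm β], Finset.sum_add_distrib,
      ← Finset.mul_sum, ← Finset.mul_sum, ← hsdef, ← hTdef]
    ring
  obtain ⟨β₀, hβ₀⟩ : ∃ β, x β ≠ 0 := by
    by_contra h
    push_neg at h
    exact hx (funext h)
  have hT : 0 < T := by
    apply Finset.sum_pos' (fun β _ => div_nonneg (sq_nonneg _) (mul_pos (hm β) (hρ β)).le)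
    exact ⟨β₀, Finset.mem_univ β₀,
      div_pos (lt_of_le_of_ne (sq_nonneg _) (Ne.symm (pow_ne_zero 2 hβ₀)))
        (mul_pos (hm β₀) (hρ β₀))⟩
  have hcs : s ^ 2 ≤ T * A := cs_ineq m ρ x hm hρ
  have h1 : 0 ≤ θ * (T - A⁻¹ * s ^ 2) := by
    apply mul_nonneg hθ.le
    rw [sub_nonneg, inv_mul_eq_div, div_le_iff₀ hA]
    exact hcs
  rw [htot]
  rcases eq_or_ne s 0 with hs | hs
  · rw [hs]
    ring_nf
    rw [hs] at h1
    ring_nf at h1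
    nlinarith [mul_pos hθ hT]
  · have h2 : 0 < K / nR * A⁻¹ * s ^ 2 :=
      mul_pos (mul_pos (div_pos hK hnR) (inv_pos.mpr hA))
        (lt_of_le_of_ne (sq_nonneg _) (Ne.symm (pow_ne_zero 2 hs)))
    linarith

lemma term_pos {u v : ℝ} (hu : 0 < u) (hv : 0 < v) (h : u ≠ v) :
    0 < (u - v) * (Real.log u - Real.log v) := by
  rcases h.lt_or_gt with h' | h'
  · have := Real.log_lt_log hu h'
    nlinarith
  · have := Real.log_lt_log hv h'
    nlinarith

lemma term_nonneg {u v : ℝ} (hu : 0 < u) (hv : 0 < v) :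
    0 ≤ (u - v) * (Real.log u - Real.log v) := by
  rcases eq_or_ne u v with h | h
  · subst h; simp
  · exact (term_pos hu hv h).le

end
end Stmt14


open Stmt14

/-- For the pure-phase free energy `F` of Statement 13, the chemical
potential map `μ_α(ρ) = ∂F/∂ρ_α(ρ)` is injective on the positive orthant, and at
every positive `ρ` the Hessian matrix `(∂μ_β/∂ρ_γ)(ρ)` is symmetric positive
definite, hence invertible. -/
theorem stmt_14 (N : ℕ) (hN : 2 ≤ N) (m : Fin N → ℝ) (hm : ∀ α : Fin N, 0 < m α)
    (K nR θ : ℝ) (hK : 0 < K) (hnR : 0 < nR) (hθ : 0 < θ)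
    (pR : ℝ) (ψR : Fin N → ℝ) (F : (Fin N → ℝ) → ℝ)
    (hF : ∀ ρ : Fin N → ℝ, F ρ =
      (∑ α, ρ α * ψR α)
      + (K - pR) * (1 - (∑ α, ρ α / m α) / nR)
      + K * ((∑ α, ρ α / m α) / nR) * Real.log ((∑ α, ρ α / m α) / nR)
      + θ * ∑ α, (ρ α / m α) * Real.log ((ρ α / m α) / (∑ β, ρ β / m β))) :
    Set.InjOn (fun ρ : Fin N → ℝ => fun α : Fin N => fderiv ℝ F ρ (Pi.single α 1))
      {ρ : Fin N → ℝ | ∀ α, 0 < ρ α} ∧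
    (∀ ρ : Fin N → ℝ, ρ ∈ {ρ : Fin N → ℝ | ∀ α, 0 < ρ α} →
      (Matrix.of fun β γ : Fin N =>
          fderiv ℝ (fun x : Fin N → ℝ => fderiv ℝ F x (Pi.single β 1)) ρ
            (Pi.single γ 1)).IsSymm ∧
      (Matrix.of fun β γ : Fin N =>
          fderiv ℝ (fun x : Fin N → ℝ => fderiv ℝ F x (Pi.single β 1)) ρ
            (Pi.single γ 1)).PosDef ∧
      IsUnit (Matrix.of fun β γ : Fin N =>
          fderiv ℝ (fun x : Fin N → ℝ => fderiv ℝ F x (Pi.single β 1)) ρ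
            (Pi.single γ 1))) := by
  have hNe : NeZero N := ⟨by omega⟩
  have hFd : F = Fdef m K nR θ pR ψR := funext fun ρ => by rw [hF ρ]; rfl
  subst hFd
  constructor
  · -- injectivity
    intro ρ hρ ρ' hρ' heq
    simp only [Set.mem_setOf_eq] at hρ hρ'
    have hMu : ∀ γ, Mu m K nR θ pR ψR γ ρ = Mu m K nR θ pR ψR γ ρ' := by
      intro γ
      have h := congrFun heq γ
      simp only at h
      rwa [fderiv_Fdef m hm K nR θ pR hnR ψR ρ hρ γ,
        fderiv_Fdef m hm K nR θ pR hnR ψR ρ' hρ' γ] at h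
    by_contra hne
    set a : Fin N → ℝ := fun γ => ρ γ / m γ with ha
    set b : Fin N → ℝ := fun γ => ρ' γ / m γ with hb
    have hai : ∀ i, 0 < a i := fun i => div_pos (hρ i) (hm i)
    have hbi : ∀ i, 0 < b i := fun i => div_pos (hρ' i) (hm i)
    have hAeq : ∑ i, a i = nsum m ρ := rfl
    have hBeq : ∑ i, b i = nsum m ρ' := rfl
    set A := nsum m ρ with hAdef
    set B := nsum m ρ' with hBdef
    have hAp : 0 < A := nsum_pos m ρ hm hρ
    have hBp : 0 < B := nsum_pos m ρ' hm hρ'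
    have hE : ∀ γ, K / nR * (Real.log A - Real.log B)
        + θ * (Real.log (a γ) - Real.log (b γ)) - θ * (Real.log A - Real.log B) = 0 := by
      intro γ
      have h := hMu γ
      unfold Mu at h
      have h3 := add_left_cancel h
      have h4 := mul_left_cancel₀ (inv_ne_zero (hm γ).ne') h3
      linear_combination h4
    set S := ∑ γ, (a γ - b γ) * (Real.log (a γ) - Real.log (b γ)) with hSdef
    have h0 : (0:ℝ) = (A - B) * (K / nR * (Real.log A - Real.log B)
        - θ * (Real.log A - Real.log B)) + θ * S := by
      have hz : (0:ℝ) = ∑ γ, (a γ - b γ) * (K / nR * (Real.log A - Real.log B)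
          + θ * (Real.log (a γ) - Real.log (b γ)) - θ * (Real.log A - Real.log B)) := by
        rw [Finset.sum_congr rfl fun γ _ => by rw [hE γ, mul_zero]]
        simp
      rw [hz, Finset.sum_congr rfl fun γ _ => show (a γ - b γ) * (K / nR * (Real.log A - Real.log B)
          + θ * (Real.log (a γ) - Real.log (b γ)) - θ * (Real.log A - Real.log B))
          = (a γ - b γ) * (K / nR * (Real.log A - Real.log B) - θ * (Real.log A - Real.log B))
            + θ * ((a γ - b γ) * (Real.log (a γ) - Real.log (b γ))) from by ring,
        Finset.sum_add_distrib, ← Finset.sum_mul, ← Finset.mul_sum, Finset.sum_sub_distrib,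
        hAeq, hBeq, ← hSdef]
    have hSP : (A - B) * (Real.log A - Real.log B) ≤ S := by
      have := log_sum_ineq a b hai hbi (hAeq ▸ hAp) (hBeq ▸ hBp)
      rwa [hAeq, hBeq] at this
    obtain ⟨γ₀, hγ₀⟩ : ∃ γ, ρ γ ≠ ρ' γ := by
      by_contra h
      push_neg at h
      exact hne (funext h)
    have hab : a γ₀ ≠ b γ₀ := by
      intro h
      apply hγ₀
      rw [ha, hb] at h
      simp only at h
      field_simp [(hm γ₀).ne'] at h
      exact h
    have hS : 0 < S := by
      apply Finset.sum_pos' (fun i _ => term_nonneg (hai i) (hbi i))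
      exact ⟨γ₀, Finset.mem_univ γ₀, term_pos (hai γ₀) (hbi γ₀) hab⟩
    rcases eq_or_ne A B with hAB | hAB
    · rw [hAB] at h0
      simp at h0
      rcases h0 with h | h
      · exact hθ.ne' h
      · exact hS.ne' h
    · have hP : 0 < (A - B) * (Real.log A - Real.log B) := term_pos hAp hBp hAB
      nlinarith [mul_pos (div_pos hK hnR) hP, mul_le_mul_of_nonneg_left hSP hθ.le]
  · -- Hessian
    intro ρ hρ
    simp only [Set.mem_setOf_eq] at hρ
    have hM : (Matrix.of fun β γ : Fin N =>
        fderiv ℝ (fun x : Fin N → ℝ => fderiv ℝ (Fdef m K nR θ pR ψR) x (Pi.single β 1)) ρ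
          (Pi.single γ 1)) = Matrix.of fun β γ => Hess m K nR θ ρ β γ := by
      ext β γ
      exact fderiv_Fdef2 m hm K nR θ pR hnR ψR ρ hρ β γ
    rw [hM]
    have hsymm : (Matrix.of fun β γ => Hess m K nR θ ρ β γ).IsSymm := by
      apply Matrix.ext
      intro β γ
      rw [Matrix.transpose_apply, Matrix.of_apply, Matrix.of_apply]
      exact Hess_symm m K nR θ ρ γ β
    have hpos : (Matrix.of fun β γ => Hess m K nR θ ρ β γ).PosDef := by
      rw [Matrix.posDef_iff_dotProduct_mulVec]
      constructor
      · rw [Matrix.IsHermitian, Matrix.conjTranspose]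
        ext i j
        simpa [Matrix.IsSymm] using congrFun (congrFun hsymm i) j
      · intro x hx
        have := quad_pos m hm K nR θ hK hnR hθ ρ hρ x hx
        simpa [dotProduct, Matrix.mulVec, star_trivial] using this
    exact ⟨hsymm, hpos, hpos.isUnit⟩
end

section
/- Let γ > 0, W(x) = (x−1)²(x+1)², and X₀(z) = tanh(√(2/γ)·z). If Ξ : ℝ → ℝ is twice continuously differentiable, bounded on ℝ, and satisfies W'(X₀(z))·Ξ'(z) + γ·(X₀'·Ξ')'(z) = 0 for all z ∈ ℝ, then Ξ is constant. -/
open Filter Real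

/-- kernel of the adjoint of the linearized Allen–Cahn operator.
If `Ξ` is `C²`, bounded, and solves `W'(X₀) Ξ' + γ (X₀' Ξ')' = 0` on `ℝ`, where
`X₀(z) = tanh(√(2/γ) z)` and `W(x) = (x-1)²(x+1)²`, then `Ξ` is constant. -/
theorem stmt_18 (γ : ℝ) (hγ : 0 < γ) (W X₀ : ℝ → ℝ)
    (hW : W = fun x => (x - 1) ^ 2 * (x + 1) ^ 2)
    (hX : X₀ = fun z => Real.tanh (Real.sqrt (2 / γ) * z))
    (Ξ : ℝ → ℝ) (hΞ : ContDiff ℝ 2 Ξ) (hb : ∃ C : ℝ, ∀ z : ℝ, |Ξ z| ≤ C)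
    (heq : ∀ z : ℝ,
      deriv W (X₀ z) * deriv Ξ z + γ * deriv (fun w => deriv X₀ w * deriv Ξ w) z = 0) :
    ∃ c : ℝ, ∀ z : ℝ, Ξ z = c := by
  obtain ⟨C, hC⟩ := hb
  set k : ℝ := Real.sqrt (2 / γ) with hk_def
  have hk2 : k ^ 2 = 2 / γ := Real.sq_sqrt (by positivity)
  have hkpos : 0 < k := Real.sqrt_pos.mpr (by positivity)
  set φ : ℝ → ℝ := fun z => k / Real.cosh (k * z) ^ 2 with hφ_def
  set u : ℝ → ℝ := deriv Ξ with hu_def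
  -- derivative of W
  have hW' : ∀ x : ℝ, HasDerivAt W (4 * x ^ 3 - 4 * x) x := by
    intro x
    have hW4 : W = fun x : ℝ => x ^ 4 - 2 * x ^ 2 + 1 := by
      rw [hW]; funext x; ring
    rw [hW4]
    have h := (((hasDerivAt_pow 4 x).sub ((hasDerivAt_pow 2 x).const_mul 2)).add_const 1)
    refine h.congr_deriv ?_
    norm_num; ring
  -- derivative of X₀
  have hXd : ∀ z : ℝ, HasDerivAt X₀ (φ z) z := by
    intro z
    have hXsc : X₀ = fun z => Real.sinh (k * z) / Real.cosh (k * z) := by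
      rw [hX]; funext z; exact Real.tanh_eq_sinh_div_cosh _
    rw [hXsc]
    have hs : HasDerivAt (fun z : ℝ => Real.sinh (k * z)) (Real.cosh (k * z) * k) z :=
      (Real.hasDerivAt_sinh (k * z)).comp z (by simpa using (hasDerivAt_id z).const_mul k)
    have hc : HasDerivAt (fun z : ℝ => Real.cosh (k * z)) (Real.sinh (k * z) * k) z :=
      (Real.hasDerivAt_cosh (k * z)).comp z (by simpa using (hasDerivAt_id z).const_mul k)
    have hcpos := Real.cosh_pos (k * z)
    have h := hs.div hc (ne_of_gt hcpos)
    have heqv : (Real.cosh (k * z) * k * Real.cosh (k * z)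
        - Real.sinh (k * z) * (Real.sinh (k * z) * k)) / Real.cosh (k * z) ^ 2
        = k / Real.cosh (k * z) ^ 2 := by
      congr 1
      linear_combination k * Real.cosh_sq_sub_sinh_sq (k * z)
    show HasDerivAt _ (k / Real.cosh (k * z) ^ 2) z
    exact heqv ▸ h
  have hderivX : deriv X₀ = φ := funext fun z => (hXd z).deriv
  -- derivative of φ
  have hφd : ∀ z : ℝ, HasDerivAt φ
      (-2 * k ^ 2 * Real.sinh (k * z) / Real.cosh (k * z) ^ 3) z := by
    intro z
    have hcpos := Real.cosh_pos (k * z)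
    have hc : HasDerivAt (fun z : ℝ => Real.cosh (k * z)) (Real.sinh (k * z) * k) z :=
      (Real.hasDerivAt_cosh (k * z)).comp z (by simpa using (hasDerivAt_id z).const_mul k)
    have hc2 : HasDerivAt (fun z : ℝ => Real.cosh (k * z) ^ 2)
        (2 * Real.cosh (k * z) ^ 1 * (Real.sinh (k * z) * k)) z := by
      simpa using hc.fun_pow 2
    have h := (hc2.inv (by positivity)).const_mul k
    have : φ = fun z : ℝ => k * (Real.cosh (k * z) ^ 2)⁻¹ := by
      funext z; rw [hφ_def]; field_simp
    rw [this]
    refine h.congr_deriv ?_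
    field_simp
  -- key pointwise identity: γ φ' = W'(X₀)
  have hkey : ∀ z : ℝ, γ * (-2 * k ^ 2 * Real.sinh (k * z) / Real.cosh (k * z) ^ 3)
      = 4 * X₀ z ^ 3 - 4 * X₀ z := by
    intro z
    have hcpos := Real.cosh_pos (k * z)
    have hpy := Real.cosh_sq_sub_sinh_sq (k * z)
    have hXv : X₀ z = Real.sinh (k * z) / Real.cosh (k * z) := by
      rw [hX]; exact Real.tanh_eq_sinh_div_cosh _
    have hγk : γ * k ^ 2 = 2 := by
      rw [hk2]; field_simp
    rw [hXv]
    have hcne : Real.cosh (k * z) ≠ 0 := ne_of_gt hcpos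
    field_simp
    linear_combination (-2 * Real.sinh (k * z)) * hγk
      + (4 * Real.sinh (k * z)) * hpy
  -- u is differentiable
  have hu_diff : Differentiable ℝ u := by
    rw [hu_def]
    have h2 : ContDiff ℝ ((1 : WithTop ℕ∞) + 1) Ξ := by
      rw [show ((1 : WithTop ℕ∞) + 1) = 2 from rfl]; exact hΞ
    exact (contDiff_succ_iff_deriv.mp h2).2.2.differentiable one_ne_zero
  -- the reduced equation: 2 W'(X₀) u + γ φ u' = 0
  have hred : ∀ z : ℝ, γ * (φ z * deriv u z + 2 * u z *
      (-2 * k ^ 2 * Real.sinh (k * z) / Real.cosh (k * z) ^ 3)) = 0 := by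
    intro z
    have h1 := heq z
    have hprod : HasDerivAt (fun w => deriv X₀ w * u w)
        ((-2 * k ^ 2 * Real.sinh (k * z) / Real.cosh (k * z) ^ 3) * u z
          + φ z * deriv u z) z := by
      rw [hderivX]
      exact (hφd z).mul (hu_diff z).hasDerivAt
    rw [hprod.deriv] at h1
    have hWd : deriv W (X₀ z) = 4 * X₀ z ^ 3 - 4 * X₀ z := (hW' (X₀ z)).deriv
    rw [hWd] at h1
    have hk2' := hkey z
    linear_combination h1 + u z * hk2'
  -- g := u φ² is constant
  set g : ℝ → ℝ := fun z => u z * φ z ^ 2 with hg_def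
  have hgd : ∀ z : ℝ, HasDerivAt g 0 z := by
    intro z
    have h := ((hu_diff z).hasDerivAt).mul ((hφd z).fun_pow 2)
    have hγne : γ ≠ 0 := ne_of_gt hγ
    have hE : φ z * deriv u z + 2 * u z *
        (-2 * k ^ 2 * Real.sinh (k * z) / Real.cosh (k * z) ^ 3) = 0 :=
      (mul_eq_zero.mp (hred z)).resolve_left hγne
    refine h.congr_deriv ?_
    push_cast
    linear_combination (φ z) * hE
  have hg_const : ∀ z : ℝ, g z = g 0 := by
    intro z
    exact is_const_of_deriv_eq_zero (fun z => (hgd z).differentiableAt)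
      (fun z => (hgd z).deriv) z 0
  have hφ0 : φ 0 = k := by simp [hφ_def]
  have hφpos : ∀ z : ℝ, 0 < φ z := fun z => by
    have := Real.cosh_pos (k * z); positivity
  have hφle : ∀ z : ℝ, φ z ≤ k := by
    intro z
    have h1 := Real.one_le_cosh (k * z)
    rw [hφ_def]
    have : (1 : ℝ) ≤ Real.cosh (k * z) ^ 2 := by nlinarith
    calc k / Real.cosh (k * z) ^ 2 ≤ k / 1 := by
          apply div_le_div_of_nonneg_left (le_of_lt hkpos) one_pos this
      _ = k := by ring
  -- show u 0 = 0
  have hu0 : u 0 = 0 := by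
    by_contra hu0
    -- u 0 * u z ≥ (u 0)^2 for all z
    have hlow : ∀ z : ℝ, u 0 ^ 2 ≤ u 0 * u z := by
      intro z
      have hg := hg_const z
      rw [hg_def] at hg
      simp only at hg
      rw [hφ0] at hg
      have h1 := hφpos z
      have h2 := hφle z
      have hφ2pos : 0 < φ z ^ 2 := by positivity
      have hφ2le : φ z ^ 2 ≤ k ^ 2 := by nlinarith
      have key : u 0 * u z * φ z ^ 2 = u 0 ^ 2 * k ^ 2 := by
        calc u 0 * u z * φ z ^ 2 = u 0 * (u z * φ z ^ 2) := by ring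
          _ = u 0 * (u 0 * k ^ 2) := by rw [hg]
          _ = u 0 ^ 2 * k ^ 2 := by ring
      nlinarith [key, mul_le_mul_of_nonneg_left hφ2le (sq_nonneg (u 0)), hφ2pos]
    -- F z = u 0 * Ξ z - u 0 ^ 2 * z is monotone
    set F : ℝ → ℝ := fun z => u 0 * Ξ z - u 0 ^ 2 * z with hF_def
    have hΞdiff : Differentiable ℝ Ξ := hΞ.differentiable (by norm_num)
    have hFd : ∀ z : ℝ, HasDerivAt F (u 0 * u z - u 0 ^ 2) z := by
      intro z
      exact (((hΞdiff z).hasDerivAt).const_mul (u 0)).sub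
        (by simpa using (hasDerivAt_id z).const_mul (u 0 ^ 2))
    have hFmono : Monotone F := by
      apply monotone_of_deriv_nonneg (fun z => (hFd z).differentiableAt)
      intro z
      rw [(hFd z).deriv]
      linarith [hlow z]
    have hC0 : 0 ≤ C := le_trans (abs_nonneg _) (hC 0)
    have hu2pos : 0 < u 0 ^ 2 := by positivity
    set T : ℝ := (2 * |u 0| * C + 1) / u 0 ^ 2 with hT_def
    have hT0 : 0 ≤ T := by positivity
    have := hFmono hT0
    rw [hF_def] at this
    simp only at this
    have h1 : u 0 ^ 2 * T = 2 * |u 0| * C + 1 := by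
      rw [hT_def]; field_simp
    have h2 : u 0 * Ξ T ≤ |u 0| * C := by
      calc u 0 * Ξ T ≤ |u 0 * Ξ T| := le_abs_self _
        _ = |u 0| * |Ξ T| := abs_mul _ _
        _ ≤ |u 0| * C := by
            apply mul_le_mul_of_nonneg_left (hC T) (abs_nonneg _)
      
    have h3 : -(|u 0| * C) ≤ u 0 * Ξ 0 := by
      have : |u 0 * Ξ 0| ≤ |u 0| * C := by
        rw [abs_mul]
        apply mul_le_mul_of_nonneg_left (hC 0) (abs_nonneg _)
      linarith [neg_abs_le (u 0 * Ξ 0)]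
    linarith
  -- hence u ≡ 0, so Ξ is constant
  have huz : ∀ z : ℝ, u z = 0 := by
    intro z
    have hg := hg_const z
    rw [hg_def] at hg
    simp only at hg
    have hg0 : u z * φ z ^ 2 = 0 := by rw [hg, hu0]; ring
    have := hφpos z
    rcases mul_eq_zero.mp hg0 with h | h
    · exact h
    · exact absurd h (by positivity)
  refine ⟨Ξ 0, fun z => ?_⟩
  exact is_const_of_deriv_eq_zero (hΞ.differentiable (by norm_num)) huz z 0
end
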